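/- arXiv:2001.11668 — 3 statements merged into one kernel-verified Lean document; each statement's English description precedes it below -/
import Mathlib

section
/- Let f : 𝕊^n → ℝ be convex and β-smooth, and let X* be a minimizer of f over S_n with rank(X*) = r and μ_n = λ_n(∇f(X*)). Let X ∈ S_n with rank(X) ≤ r, let V ∈ ℝ^{n×r} be a matrix with orthonormal columns whose columns are eigenvectors of X spanning its range (extended arbitrarily with orthonormal vectors if rank(X) < r), and let ∇̃ ∈ 𝕊^n satisfy ‖∇̃ − ∇f(X)‖ ≤ ξ (spectral norm). Then −⟨VVᵀ, ∇̃⟩ ≥ −rμ_n − rξ − √r · ‖X − X*‖_F · (√r·β + 2√2·‖∇̃‖/λ_r(X*)), where ⟨A, B⟩ = Tr(A Bᵀ) and ‖·‖ is the spectral norm. -/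
open scoped BigOperators
open MeasureTheory
open scoped Matrix

namespace LRSGD

noncomputable def frobInner {n : ℕ} (A B : Matrix (Fin n) (Fin n) ℝ) : ℝ :=
  Matrix.trace (A * Bᵀ)

noncomputable def frobNorm {n : ℕ} (A : Matrix (Fin n) (Fin n) ℝ) : ℝ :=
  Real.sqrt (∑ i, ∑ j, (A i j) ^ 2)

noncomputable def specNorm {n : ℕ} (A : Matrix (Fin n) (Fin n) ℝ) : ℝ :=
  sSup {s : ℝ | ∃ u : Fin n → ℝ, (∑ k, u k ^ 2) = 1 ∧
    s = Real.sqrt (∑ i, (A.mulVec u i) ^ 2)}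

def spectrahedron (n : ℕ) : Set (Matrix (Fin n) (Fin n) ℝ) :=
  {X | X.PosSemidef ∧ X.trace = 1}

def IsProjOn {n : ℕ} (S : Set (Matrix (Fin n) (Fin n) ℝ))
    (M P : Matrix (Fin n) (Fin n) ℝ) : Prop :=
  P ∈ S ∧ ∀ Z ∈ S, frobNorm (M - P) ≤ frobNorm (M - Z)

def IsEigenDecomp {n : ℕ} (M : Matrix (Fin n) (Fin n) ℝ)
    (lam : Fin n → ℝ) (v : Fin n → Fin n → ℝ) : Prop :=
  Antitone lam ∧
  (∀ i j, (∑ k, v i k * v j k) = if i = j then (1 : ℝ) else 0) ∧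
  M = ∑ i, lam i • Matrix.vecMulVec (v i) (v i)

def IsGradient {n : ℕ} (f : Matrix (Fin n) (Fin n) ℝ → ℝ)
    (g : Matrix (Fin n) (Fin n) ℝ → Matrix (Fin n) (Fin n) ℝ) : Prop :=
  ∀ X H : Matrix (Fin n) (Fin n) ℝ,
    HasDerivAt (fun t : ℝ => f (X + t • H)) (frobInner (g X) H) 0

def IsMinimizerOn {n : ℕ} (f : Matrix (Fin n) (Fin n) ℝ → ℝ)
    (S : Set (Matrix (Fin n) (Fin n) ℝ)) (Xs : Matrix (Fin n) (Fin n) ℝ) : Prop :=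
  Xs ∈ S ∧ ∀ Y ∈ S, f Xs ≤ f Y


section Aux
variable {n : ℕ}

lemma frobInner_eq_sum (A B : Matrix (Fin n) (Fin n) ℝ) :
    frobInner A B = ∑ i, ∑ j, A i j * B i j := by
  simp [frobInner, Matrix.trace, Matrix.mul_apply, Matrix.diag]

lemma frobNorm_nonneg (A : Matrix (Fin n) (Fin n) ℝ) : 0 ≤ frobNorm A := Real.sqrt_nonneg _

lemma sq_frobNorm (A : Matrix (Fin n) (Fin n) ℝ) :
    frobNorm A ^ 2 = ∑ i, ∑ j, (A i j) ^ 2 := Real.sq_sqrt (by positivity)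

lemma frobInner_le (A B : Matrix (Fin n) (Fin n) ℝ) :
    frobInner A B ≤ frobNorm A * frobNorm B := by
  rw [frobInner_eq_sum, frobNorm, frobNorm,
    ← Finset.sum_product' (f := fun i j => A i j * B i j),
    ← Finset.sum_product' (f := fun i j => A i j ^ 2),
    ← Finset.sum_product' (f := fun i j => B i j ^ 2)]
  exact Real.sum_mul_le_sqrt_mul_sqrt _ _ _

lemma specNorm_bdd (A : Matrix (Fin n) (Fin n) ℝ) :
    ∀ s ∈ {s : ℝ | ∃ u : Fin n → ℝ, (∑ k, u k ^ 2) = 1 ∧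
      s = Real.sqrt (∑ i, (A.mulVec u i) ^ 2)}, s ≤ frobNorm A := by
  rintro s ⟨u, hu, rfl⟩
  rw [frobNorm]
  apply Real.sqrt_le_sqrt
  refine Finset.sum_le_sum fun i _ => ?_
  have : (A.mulVec u i) ^ 2 ≤ (∑ j, A i j ^ 2) * ∑ k, u k ^ 2 := by
    have := Finset.sum_mul_sq_le_sq_mul_sq Finset.univ (fun j => A i j) u
    simpa [Matrix.mulVec, dotProduct] using this
  simpa [hu] using this

lemma unit_le_specNorm (A : Matrix (Fin n) (Fin n) ℝ) {u : Fin n → ℝ}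
    (hu : (∑ k, u k ^ 2) = 1) :
    Real.sqrt (∑ i, (A.mulVec u i) ^ 2) ≤ specNorm A :=
  le_csSup ⟨frobNorm A, fun s hs => specNorm_bdd A s hs⟩ ⟨u, hu, rfl⟩

lemma specNorm_nonneg (hn : 0 < n) (A : Matrix (Fin n) (Fin n) ℝ) : 0 ≤ specNorm A := by
  have hu : (∑ k : Fin n, (if k = (⟨0, hn⟩ : Fin n) then (1:ℝ) else 0) ^ 2) = 1 := by
    simp [ite_pow]
  exact le_trans (Real.sqrt_nonneg _) (unit_le_specNorm A hu)

lemma sq_mulVec_le (hn : 0 < n) (A : Matrix (Fin n) (Fin n) ℝ) (u : Fin n → ℝ) :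
    ∑ i, (A.mulVec u i) ^ 2 ≤ specNorm A ^ 2 * ∑ k, u k ^ 2 := by
  by_cases hu0 : ∑ k, u k ^ 2 = 0
  · have hz : ∀ k, u k = 0 := by
      intro k
      have := (Finset.sum_eq_zero_iff_of_nonneg (by intro i _; positivity)).mp hu0 k (by simp)
      exact pow_eq_zero_iff (n := 2) (by norm_num) |>.mp this
    have : u = 0 := funext hz
    subst this
    simp [Matrix.mulVec_zero]
  · have hpos : 0 < ∑ k, u k ^ 2 :=
      lt_of_le_of_ne (Finset.sum_nonneg fun i _ => sq_nonneg _) (Ne.symm hu0)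
    set c := Real.sqrt (∑ k, u k ^ 2) with hc
    have hcpos : 0 < c := Real.sqrt_pos.mpr hpos
    have hc2 : c ^ 2 = ∑ k, u k ^ 2 := Real.sq_sqrt hpos.le
    set u' : Fin n → ℝ := fun k => c⁻¹ * u k with hu'
    have hu'1 : (∑ k, u' k ^ 2) = 1 := by
      simp only [hu', mul_pow, ← Finset.mul_sum]
      rw [← hc2]
      field_simp
    have hle := unit_le_specNorm A hu'1
    have hmv : ∀ i, A.mulVec u' i = c⁻¹ * A.mulVec u i := by
      intro i
      simp only [hu', Matrix.mulVec, dotProduct, Finset.mul_sum]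
      exact Finset.sum_congr rfl fun x _ => by ring
    have hsum : (∑ i, (A.mulVec u' i) ^ 2) = c⁻¹ ^ 2 * ∑ i, (A.mulVec u i) ^ 2 := by
      simp only [hmv, mul_pow, Finset.mul_sum]
    have h1 : (∑ i, (A.mulVec u' i) ^ 2) ≤ specNorm A ^ 2 := by
      have hnn : 0 ≤ specNorm A := specNorm_nonneg hn A
      calc (∑ i, (A.mulVec u' i) ^ 2) = Real.sqrt (∑ i, (A.mulVec u' i) ^ 2) ^ 2 :=
            (Real.sq_sqrt (by positivity)).symm
        _ ≤ specNorm A ^ 2 := by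
            apply pow_le_pow_left₀ (Real.sqrt_nonneg _) hle
    rw [hsum] at h1
    have := mul_le_mul_of_nonneg_right h1 (le_of_lt (by positivity : (0:ℝ) < c ^ 2))
    calc (∑ i, (A.mulVec u i) ^ 2)
        = c⁻¹ ^ 2 * (∑ i, (A.mulVec u i) ^ 2) * c ^ 2 := by
          field_simp
      _ ≤ specNorm A ^ 2 * c ^ 2 := this
      _ = specNorm A ^ 2 * ∑ k, u k ^ 2 := by rw [hc2]

lemma dot_mulVec_le (hn : 0 < n) (A : Matrix (Fin n) (Fin n) ℝ) (u v : Fin n → ℝ) :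
    u ⬝ᵥ A.mulVec v ≤ specNorm A * Real.sqrt (∑ k, u k ^ 2) * Real.sqrt (∑ k, v k ^ 2) := by
  have h1 : u ⬝ᵥ A.mulVec v ≤
      Real.sqrt (∑ k, u k ^ 2) * Real.sqrt (∑ i, (A.mulVec v i) ^ 2) := by
    simpa [dotProduct] using
      Real.sum_mul_le_sqrt_mul_sqrt Finset.univ u (A.mulVec v)
  have h2 : Real.sqrt (∑ i, (A.mulVec v i) ^ 2) ≤ specNorm A * Real.sqrt (∑ k, v k ^ 2) := by
    have := Real.sqrt_le_sqrt (sq_mulVec_le hn A v)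
    rwa [Real.sqrt_mul (by positivity), Real.sqrt_sq (specNorm_nonneg hn A)] at this
  calc u ⬝ᵥ A.mulVec v ≤ Real.sqrt (∑ k, u k ^ 2) * Real.sqrt (∑ i, (A.mulVec v i) ^ 2) := h1
    _ ≤ Real.sqrt (∑ k, u k ^ 2) * (specNorm A * Real.sqrt (∑ k, v k ^ 2)) := by
        apply mul_le_mul_of_nonneg_left h2 (Real.sqrt_nonneg _)
    _ = specNorm A * Real.sqrt (∑ k, u k ^ 2) * Real.sqrt (∑ k, v k ^ 2) := by ring

end Aux

section Opt
variable {n : ℕ}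

lemma psd_smul {M : Matrix (Fin n) (Fin n) ℝ} (hM : M.PosSemidef) {t : ℝ} (ht : 0 ≤ t) :
    (t • M).PosSemidef := by
  rw [Matrix.posSemidef_iff_dotProduct_mulVec]
  constructor
  · unfold Matrix.IsHermitian
    rw [Matrix.conjTranspose_smul]
    rw [hM.1]
    simp
  · intro x
    rw [Matrix.smul_mulVec, dotProduct_smul]
    exact mul_nonneg ht (hM.dotProduct_mulVec_nonneg x)

lemma spectrahedron_convex_seg {Xs Z : Matrix (Fin n) (Fin n) ℝ}
    (hXs : Xs ∈ spectrahedron n) (hZ : Z ∈ spectrahedron n) {t : ℝ}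
    (ht0 : 0 ≤ t) (ht1 : t ≤ 1) : Xs + t • (Z - Xs) ∈ spectrahedron n := by
  have hEq : Xs + t • (Z - Xs) = (1 - t) • Xs + t • Z := by
    rw [smul_sub]; module
  rw [hEq]
  constructor
  · exact (psd_smul hXs.1 (by linarith)).add (psd_smul hZ.1 ht0)
  · rw [Matrix.trace_add, Matrix.trace_smul, Matrix.trace_smul, hXs.2, hZ.2]
    simp

lemma opt_ineq {f : Matrix (Fin n) (Fin n) ℝ → ℝ}
    {g : Matrix (Fin n) (Fin n) ℝ → Matrix (Fin n) (Fin n) ℝ}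
    (hgrad : IsGradient f g) {Xs : Matrix (Fin n) (Fin n) ℝ}
    (hmin : IsMinimizerOn f (spectrahedron n) Xs)
    {Z : Matrix (Fin n) (Fin n) ℝ} (hZ : Z ∈ spectrahedron n) :
    0 ≤ frobInner (g Xs) (Z - Xs) := by
  have hd := hgrad Xs (Z - Xs)
  rw [hasDerivAt_iff_tendsto_slope] at hd
  have hd' : Filter.Tendsto (slope (fun t : ℝ => f (Xs + t • (Z - Xs))) 0)
      (nhdsWithin 0 (Set.Ioi 0)) (nhds (frobInner (g Xs) (Z - Xs))) :=
    hd.mono_left (nhdsWithin_mono 0 (fun x hx => ne_of_gt hx))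
  refine ge_of_tendsto hd' ?_
  filter_upwards [Ioc_mem_nhdsGT_of_mem (Set.mem_Ico.mpr ⟨le_refl _, zero_lt_one⟩)]
    with t ht
  have hmem := spectrahedron_convex_seg hmin.1 hZ (le_of_lt ht.1) ht.2
  have hle : f Xs ≤ f (Xs + t • (Z - Xs)) := hmin.2 _ hmem
  rw [slope_def_field]
  have h0 : f (Xs + (0:ℝ) • (Z - Xs)) = f Xs := by simp
  simp only [sub_zero]
  apply div_nonneg _ (le_of_lt ht.1)
  simp only [h0]
  linarith

end Opt

section Vec
variable {n r : ℕ}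

lemma dot_sum_right (u : Fin n → ℝ) (c : Fin r → Fin n → ℝ) :
    u ⬝ᵥ (∑ j, c j) = ∑ j, u ⬝ᵥ c j := by
  simp only [dotProduct, Finset.sum_apply, Finset.mul_sum]
  exact Finset.sum_comm

lemma sum_dot_left (u : Fin n → ℝ) (c : Fin r → Fin n → ℝ) :
    (∑ j, c j) ⬝ᵥ u = ∑ j, c j ⬝ᵥ u := by
  simp only [dotProduct, Finset.sum_apply, Finset.sum_mul]
  exact Finset.sum_comm

lemma sum_mulVec (M : Fin r → Matrix (Fin n) (Fin n) ℝ) (q : Fin n → ℝ) :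
    (∑ i, M i).mulVec q = ∑ i, (M i).mulVec q := by
  funext k
  simp only [Matrix.mulVec, dotProduct, Matrix.sum_apply, Finset.sum_apply,
    Finset.sum_mul]
  exact Finset.sum_comm

lemma vecMulVec_mulVec (a b q : Fin n → ℝ) :
    (Matrix.vecMulVec a b).mulVec q = (b ⬝ᵥ q) • a := by
  funext k
  simp only [Matrix.mulVec, dotProduct, Matrix.vecMulVec_apply, Pi.smul_apply,
    smul_eq_mul, Finset.sum_mul, Finset.mul_sum]
  rw [Finset.sum_congr rfl]
  intro x _; ring

-- symmetric swap
lemma dot_mulVec_symm {D : Matrix (Fin n) (Fin n) ℝ} (hD : D.IsSymm) (u v : Fin n → ℝ) :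
    u ⬝ᵥ D.mulVec v = v ⬝ᵥ D.mulVec u := by
  have hDe : ∀ j k, D k j = D j k := fun j k => by
    conv_lhs => rw [← hD]
    rfl
  simp only [dotProduct, Matrix.mulVec, Finset.mul_sum]
  rw [Finset.sum_comm]
  refine Finset.sum_congr rfl fun j _ => Finset.sum_congr rfl fun k _ => ?_
  rw [hDe j k]; ring

-- column orthonormality from row orthonormality
lemma colOrth {v : Fin n → Fin n → ℝ}
    (hv : ∀ i j, (∑ k, v i k * v j k) = if i = j then (1:ℝ) else 0) :
    ∀ j k, (∑ i, v i j * v i k) = if j = k then (1:ℝ) else 0 := by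
  intro j k
  let W : Matrix (Fin n) (Fin n) ℝ := Matrix.of v
  have h1 : W * Wᵀ = 1 := by
    ext i j
    simpa [W, Matrix.mul_apply, Matrix.one_apply] using hv i j
  have h2 : Wᵀ * W = 1 := mul_eq_one_comm.mp h1
  have := congrFun (congrFun h2 j) k
  simpa [W, Matrix.mul_apply, Matrix.one_apply] using this

lemma vecParseval {v : Fin n → Fin n → ℝ}
    (hv : ∀ i j, (∑ k, v i k * v j k) = if i = j then (1:ℝ) else 0)
    (y : Fin n → ℝ) : (∑ i, (v i ⬝ᵥ y) ^ 2) = y ⬝ᵥ y := by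
  have hcol := colOrth hv
  simp only [dotProduct, sq, Finset.sum_mul_sum]
  rw [Finset.sum_comm]
  calc ∑ j, ∑ i, ∑ k, (v i j * y j) * (v i k * y k)
      = ∑ j, ∑ k, (y j * y k) * ∑ i, v i j * v i k := by
        refine Finset.sum_congr rfl fun j _ => ?_
        rw [Finset.sum_comm]
        refine Finset.sum_congr rfl fun k _ => ?_
        rw [Finset.mul_sum]
        refine Finset.sum_congr rfl fun i _ => by ring
    _ = ∑ j, y j * y j := by
        refine Finset.sum_congr rfl fun j _ => ?_
        rw [Finset.sum_eq_single j]
        · rw [hcol j j]; simp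
        · intro k _ hk
          rw [hcol j k, if_neg (Ne.symm hk)]
          ring
        · intro h; exact absurd (Finset.mem_univ j) h

lemma matParseval {v : Fin n → Fin n → ℝ}
    (hv : ∀ i j, (∑ k, v i k * v j k) = if i = j then (1:ℝ) else 0)
    (M : Matrix (Fin n) (Fin n) ℝ) :
    (∑ i, (M.mulVec (v i)) ⬝ᵥ (M.mulVec (v i))) = ∑ j, ∑ k, (M j k) ^ 2 := by
  have h0 : ∀ i j, M.mulVec (v i) j = (v i) ⬝ᵥ (fun k => M j k) := by
    intro i j
    simp only [Matrix.mulVec, dotProduct]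
    exact Finset.sum_congr rfl fun k _ => by ring
  have h1 : ∀ i, (M.mulVec (v i)) ⬝ᵥ (M.mulVec (v i)) = ∑ j, ((v i) ⬝ᵥ (fun k => M j k)) ^ 2 := by
    intro i
    simp only [dotProduct, sq, h0]
  simp only [h1]
  rw [Finset.sum_comm]
  refine Finset.sum_congr rfl fun j _ => ?_
  rw [vecParseval hv]
  simp only [dotProduct, sq]

end Vec


section Proj
variable {n r : ℕ} {a b : Fin r → Fin n → ℝ}

lemma proj_self (ha : ∀ i j, a i ⬝ᵥ a j = if i = j then (1:ℝ) else 0) (c : Fin r → ℝ) :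
    (∑ i, c i • a i) ⬝ᵥ (∑ j, c j • a j) = ∑ i, c i ^ 2 := by
  rw [sum_dot_left]
  refine Finset.sum_congr rfl fun i _ => ?_
  rw [smul_dotProduct, dot_sum_right]
  simp only [dotProduct_smul, smul_eq_mul]
  rw [Finset.sum_eq_single i]
  · simp [ha i i, sq]
  · intro j _ hj
    rw [ha i j, if_neg (fun h : i = j => hj h.symm)]
    ring
  · intro h; exact absurd (Finset.mem_univ i) h

lemma resid_norm (ha : ∀ i j, a i ⬝ᵥ a j = if i = j then (1:ℝ) else 0) (q : Fin n → ℝ) :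
    (q - ∑ i, (a i ⬝ᵥ q) • a i) ⬝ᵥ (q - ∑ i, (a i ⬝ᵥ q) • a i)
      = q ⬝ᵥ q - ∑ i, (a i ⬝ᵥ q) ^ 2 := by
  set p := ∑ i, (a i ⬝ᵥ q) • a i with hp
  have h1 : q ⬝ᵥ p = ∑ i, (a i ⬝ᵥ q) ^ 2 := by
    rw [hp, dot_sum_right]
    refine Finset.sum_congr rfl fun i _ => ?_
    rw [dotProduct_smul, smul_eq_mul, dotProduct_comm, sq]
  have h2 : p ⬝ᵥ q = ∑ i, (a i ⬝ᵥ q) ^ 2 := by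
    rw [dotProduct_comm]; exact h1
  have h3 : p ⬝ᵥ p = ∑ i, (a i ⬝ᵥ q) ^ 2 := proj_self ha _
  rw [sub_dotProduct, dotProduct_sub, dotProduct_sub, h1, h2, h3]
  ring

lemma proj_fixes (ha : ∀ i j, a i ⬝ᵥ a j = if i = j then (1:ℝ) else 0) (c : Fin r → ℝ) :
    (∑ j, (a j ⬝ᵥ (∑ i, c i • a i)) • a j) = ∑ i, c i • a i := by
  refine Finset.sum_congr rfl fun j _ => ?_
  congr 1
  rw [dot_sum_right]
  simp only [dotProduct_smul, smul_eq_mul]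
  rw [Finset.sum_eq_single j]
  · simp [ha j j]
  · intro i _ hi
    rw [ha j i, if_neg (fun h : j = i => hi h.symm)]
    ring
  · intro h; exact absurd (Finset.mem_univ j) h

lemma split_sum {D : Matrix (Fin n) (Fin n) ℝ} (hD : D.IsSymm)
    (a b : Fin r → Fin n → ℝ) :
    ∑ i, (a i ⬝ᵥ D.mulVec (a i)) - ∑ j, (b j ⬝ᵥ D.mulVec (b j))
      = ∑ i, ((a i - ∑ j, (b j ⬝ᵥ a i) • b j) ⬝ᵥ D.mulVec (a i))
        - ∑ j, ((b j - ∑ i, (a i ⬝ᵥ b j) • a i) ⬝ᵥ D.mulVec (b j)) := by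
  have key : ∑ i, ((∑ j, (b j ⬝ᵥ a i) • b j) ⬝ᵥ D.mulVec (a i))
      = ∑ j, ((∑ i, (a i ⬝ᵥ b j) • a i) ⬝ᵥ D.mulVec (b j)) := by
    simp only [sum_dot_left, smul_dotProduct, smul_eq_mul]
    rw [Finset.sum_comm]
    refine Finset.sum_congr rfl fun j _ => Finset.sum_congr rfl fun i _ => ?_
    rw [dotProduct_comm (b j) (a i), dot_mulVec_symm hD (b j) (a i)]
  simp only [sub_dotProduct, Finset.sum_sub_distrib]
  rw [key]
  ring

end Proj


section Eigen
variable {n : ℕ}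

lemma eigen_of_decomp {M : Matrix (Fin n) (Fin n) ℝ} {lam : Fin n → ℝ} {v : Fin n → Fin n → ℝ}
    (hv : ∀ i j, v i ⬝ᵥ v j = if i = j then (1:ℝ) else 0)
    (hM : M = ∑ i, lam i • Matrix.vecMulVec (v i) (v i)) (j : Fin n) :
    M.mulVec (v j) = lam j • v j := by
  rw [hM, sum_mulVec (fun i => lam i • Matrix.vecMulVec (v i) (v i))]
  have h1 : ∀ i, (lam i • Matrix.vecMulVec (v i) (v i)).mulVec (v j)
      = (lam i * (v i ⬝ᵥ v j)) • v i := by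
    intro i
    rw [Matrix.smul_mulVec, vecMulVec_mulVec, smul_smul]
  simp only [h1]
  rw [Finset.sum_eq_single j]
  · rw [hv j j]; simp
  · intro i _ hi; rw [hv i j, if_neg hi]; simp
  · intro h; exact absurd (Finset.mem_univ j) h

lemma dot_orth {v : Fin n → Fin n → ℝ} (hv : ∀ i j, (∑ k, v i k * v j k) = if i = j then (1:ℝ) else 0) :
    ∀ i j, v i ⬝ᵥ v j = if i = j then (1:ℝ) else 0 := hv

lemma trace_of_decomp {M : Matrix (Fin n) (Fin n) ℝ} {lam : Fin n → ℝ} {v : Fin n → Fin n → ℝ}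
    (hv : ∀ i j, v i ⬝ᵥ v j = if i = j then (1:ℝ) else 0)
    (hM : M = ∑ i, lam i • Matrix.vecMulVec (v i) (v i)) :
    M.trace = ∑ i, lam i := by
  rw [hM, Matrix.trace_sum]
  refine Finset.sum_congr rfl fun i _ => ?_
  rw [Matrix.trace_smul]
  have : (Matrix.vecMulVec (v i) (v i)).trace = v i ⬝ᵥ v i := by
    simp [Matrix.trace, Matrix.diag, Matrix.vecMulVec_apply, dotProduct]
  rw [this, hv i i]
  simp

lemma frobInner_vecMulVec_right (E : Matrix (Fin n) (Fin n) ℝ) (y : Fin n → ℝ) :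
    frobInner E (Matrix.vecMulVec y y) = y ⬝ᵥ E.mulVec y := by
  rw [frobInner_eq_sum]
  simp only [Matrix.vecMulVec_apply, dotProduct, Matrix.mulVec, Finset.mul_sum]
  refine Finset.sum_congr rfl fun j _ => Finset.sum_congr rfl fun k _ => by ring

lemma frobInner_vecMulVec_left (E : Matrix (Fin n) (Fin n) ℝ) (y : Fin n → ℝ) :
    frobInner (Matrix.vecMulVec y y) E = y ⬝ᵥ E.mulVec y := by
  rw [frobInner_eq_sum]
  simp only [Matrix.vecMulVec_apply, dotProduct, Matrix.mulVec, Finset.mul_sum]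
  refine Finset.sum_congr rfl fun j _ => Finset.sum_congr rfl fun k _ => by ring

lemma frobInner_sub_right (A B C : Matrix (Fin n) (Fin n) ℝ) :
    frobInner A (B - C) = frobInner A B - frobInner A C := by
  simp only [frobInner_eq_sum, Matrix.sub_apply, mul_sub, Finset.sum_sub_distrib]

lemma frobInner_sum_right {m : ℕ} (A : Matrix (Fin n) (Fin n) ℝ)
    (Ms : Fin m → Matrix (Fin n) (Fin n) ℝ) :
    frobInner A (∑ i, Ms i) = ∑ i, frobInner A (Ms i) := by
  simp only [frobInner_eq_sum, Matrix.sum_apply, Finset.mul_sum]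
  have h1 : ∀ i : Fin n, (∑ j, ∑ x, A i j * Ms x i j) = ∑ x, ∑ j, A i j * Ms x i j :=
    fun i => Finset.sum_comm
  simp only [h1]
  exact Finset.sum_comm

lemma frobInner_smul_right (A B : Matrix (Fin n) (Fin n) ℝ) (c : ℝ) :
    frobInner A (c • B) = c * frobInner A B := by
  simp only [frobInner_eq_sum, Matrix.smul_apply, smul_eq_mul, Finset.mul_sum]
  refine Finset.sum_congr rfl fun i _ => Finset.sum_congr rfl fun j _ => by ring

lemma quad_lower (hn : 0 < n) {G : Matrix (Fin n) (Fin n) ℝ} {mu : Fin n → ℝ}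
    {w : Fin n → Fin n → ℝ} (hanti : Antitone mu)
    (hw : ∀ i j, (∑ k, w i k * w j k) = if i = j then (1:ℝ) else 0)
    (hG : G = ∑ i, mu i • Matrix.vecMulVec (w i) (w i)) (y : Fin n → ℝ) :
    mu ⟨n - 1, by omega⟩ * (y ⬝ᵥ y) ≤ y ⬝ᵥ G.mulVec y := by
  have hGy : y ⬝ᵥ G.mulVec y = ∑ i, mu i * (w i ⬝ᵥ y) ^ 2 := by
    rw [hG, sum_mulVec]
    rw [dot_sum_right]
    refine Finset.sum_congr rfl fun i _ => ?_
    rw [Matrix.smul_mulVec, vecMulVec_mulVec, smul_smul, dotProduct_smul]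
    rw [dotProduct_comm]
    simp [sq]; ring
  rw [hGy, ← vecParseval hw y, Finset.mul_sum]
  refine Finset.sum_le_sum fun i _ => ?_
  have hle : mu ⟨n - 1, by omega⟩ ≤ mu i := hanti (by
    show i ≤ (⟨n - 1, by omega⟩ : Fin n)
    rw [Fin.le_def]
    simp only
    omega)
  exact mul_le_mul_of_nonneg_right hle (sq_nonneg _)

end Eigen

section Helpers2
variable {n r : ℕ}

lemma frobInner_sum_left {m : ℕ} (A : Matrix (Fin n) (Fin n) ℝ)
    (Ms : Fin m → Matrix (Fin n) (Fin n) ℝ) :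
    frobInner (∑ i, Ms i) A = ∑ i, frobInner (Ms i) A := by
  simp only [frobInner_eq_sum, Matrix.sum_apply, Finset.sum_mul]
  have h1 : ∀ i : Fin n, (∑ j, ∑ x, Ms x i j * A i j) = ∑ x, ∑ j, Ms x i j * A i j :=
    fun i => Finset.sum_comm
  simp only [h1]
  exact Finset.sum_comm

lemma frobInner_self (A : Matrix (Fin n) (Fin n) ℝ) :
    frobInner A A = ∑ i, ∑ j, (A i j) ^ 2 := by
  rw [frobInner_eq_sum]
  exact Finset.sum_congr rfl fun i _ => Finset.sum_congr rfl fun j _ => (sq (A i j)).symm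

lemma dot_self_eq_sum_sq (u : Fin n → ℝ) : u ⬝ᵥ u = ∑ k, u k ^ 2 := by
  simp [dotProduct, sq]

lemma dot_self_nonneg (u : Fin n → ℝ) : 0 ≤ u ⬝ᵥ u := by
  rw [dot_self_eq_sum_sq]; positivity

lemma dot_mulVec_le' (hn : 0 < n) (A : Matrix (Fin n) (Fin n) ℝ) (u v : Fin n → ℝ) :
    u ⬝ᵥ A.mulVec v ≤ specNorm A * Real.sqrt (u ⬝ᵥ u) * Real.sqrt (v ⬝ᵥ v) := by
  rw [dot_self_eq_sum_sq, dot_self_eq_sum_sq]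
  exact dot_mulVec_le hn A u v

lemma sum_sqrt_le (x : Fin r → ℝ) (hx : ∀ i, 0 ≤ x i) :
    (∑ i, Real.sqrt (x i)) ≤ Real.sqrt r * Real.sqrt (∑ i, x i) := by
  have h := Real.sum_mul_le_sqrt_mul_sqrt Finset.univ (fun _ => (1:ℝ))
    (fun i => Real.sqrt (x i))
  simp only [one_mul, one_pow] at h
  have h1 : ∀ i : Fin r, Real.sqrt (x i) ^ 2 = x i := fun i => Real.sq_sqrt (hx i)
  simp only [h1] at h
  simpa using h

lemma sum_emb_le (hrn : r ≤ n) (f : Fin n → ℝ) (hf : ∀ i, 0 ≤ f i) :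
    (∑ j : Fin r, f ⟨j.1, lt_of_lt_of_le j.2 hrn⟩) ≤ ∑ i, f i := by
  classical
  have hinj : Function.Injective (fun j : Fin r => (⟨j.1, lt_of_lt_of_le j.2 hrn⟩ : Fin n)) := by
    intro a b hab
    have := congrArg Fin.val hab
    exact Fin.ext this
  rw [← Finset.sum_image (f := f) (g := fun j : Fin r => (⟨j.1, lt_of_lt_of_le j.2 hrn⟩ : Fin n))
    (fun a _ b _ hab => hinj hab)]
  exact Finset.sum_le_sum_of_subset_of_nonneg (Finset.subset_univ _)
    (fun i _ _ => hf i)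

end Helpers2

section Comp
variable {n r : ℕ}

lemma projMat_mulVec {b : Fin r → Fin n → ℝ}
    (hb : ∀ i j, b i ⬝ᵥ b j = if i = j then (1:ℝ) else 0) (j : Fin r) :
    (∑ i, Matrix.vecMulVec (b i) (b i)).mulVec (b j) = b j := by
  rw [sum_mulVec]
  simp only [vecMulVec_mulVec]
  rw [Finset.sum_eq_single j]
  · rw [hb j j]; simp
  · intro i _ hi; rw [hb i j, if_neg hi]; simp
  · intro h; exact absurd (Finset.mem_univ j) h

lemma vecMulVec_self_mem_spectrahedron {y : Fin n → ℝ} (hy : y ⬝ᵥ y = 1) :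
    Matrix.vecMulVec y y ∈ spectrahedron n := by
  refine ⟨Matrix.posSemidef_iff_dotProduct_mulVec.mpr ⟨?_, ?_⟩, ?_⟩
  · ext i j
    simp [Matrix.conjTranspose_apply, Matrix.vecMulVec_apply, mul_comm]
  · intro x
    rw [vecMulVec_mulVec]
    simp only [star_trivial, dotProduct_smul, smul_eq_mul]
    rw [dotProduct_comm]
    exact mul_self_nonneg _
  · simpa [Matrix.trace, Matrix.diag, Matrix.vecMulVec_apply, dotProduct] using hy

lemma comp_mu (hn : 0 < n)
    {f : Matrix (Fin n) (Fin n) ℝ → ℝ} {g : Matrix (Fin n) (Fin n) ℝ → Matrix (Fin n) (Fin n) ℝ}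
    (hgrad : IsGradient f g) {Xstar : Matrix (Fin n) (Fin n) ℝ}
    (hmin : IsMinimizerOn f (spectrahedron n) Xstar)
    {mu : Fin n → ℝ} {w : Fin n → Fin n → ℝ} (hmu : IsEigenDecomp (g Xstar) mu w)
    {lamX : Fin n → ℝ} {vX : Fin n → Fin n → ℝ} (hlamX : IsEigenDecomp Xstar lamX vX) :
    (∀ i, 0 ≤ lamX i) ∧
      (∀ i : Fin n, lamX i ≠ 0 →
        vX i ⬝ᵥ (g Xstar).mulVec (vX i) = mu ⟨n - 1, by omega⟩) := by
  obtain ⟨hmuAnti, hworth, hGdecomp⟩ := hmu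
  obtain ⟨hlamAnti, hvorth, hXsdecomp⟩ := hlamX
  set G := g Xstar with hG
  set μ : ℝ := mu ⟨n - 1, by omega⟩ with hμ
  -- eigen relations
  have heig : ∀ j, Xstar.mulVec (vX j) = lamX j • vX j :=
    fun j => eigen_of_decomp hvorth hXsdecomp j
  have hvv1 : ∀ i, vX i ⬝ᵥ vX i = 1 := by
    intro i
    have := hvorth i i
    simp only [if_pos rfl] at this
    simpa [dotProduct] using this
  -- nonnegativity of lamX
  have hlamnn : ∀ i, 0 ≤ lamX i := by
    intro i
    have hpsd := hmin.1.1.dotProduct_mulVec_nonneg (vX i)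
    rw [heig i] at hpsd
    simp only [star_trivial, dotProduct_smul, smul_eq_mul] at hpsd
    rwa [hvv1 i, mul_one] at hpsd
  refine ⟨hlamnn, ?_⟩
  -- optimality vs wlast wlastᵀ
  set wl : Fin n → ℝ := w ⟨n - 1, by omega⟩ with hwl
  have hwl1 : wl ⬝ᵥ wl = 1 := by
    have := hworth ⟨n - 1, by omega⟩ ⟨n - 1, by omega⟩
    simp only [if_pos rfl] at this
    simpa [hwl, dotProduct] using this
  have hZ := vecMulVec_self_mem_spectrahedron hwl1
  have hopt := opt_ineq hgrad hmin hZ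
  rw [frobInner_sub_right] at hopt
  have hGwl : G.mulVec wl = μ • wl := eigen_of_decomp hworth hGdecomp _
  have hGZ : frobInner G (Matrix.vecMulVec wl wl) = μ := by
    rw [frobInner_vecMulVec_right, hGwl]
    simp only [dotProduct_smul, smul_eq_mul]
    rw [hwl1, mul_one]
  have hGXs : frobInner G Xstar = ∑ i, lamX i * (vX i ⬝ᵥ G.mulVec (vX i)) := by
    conv_lhs => rw [hXsdecomp]
    rw [frobInner_sum_right]
    refine Finset.sum_congr rfl fun i _ => ?_
    rw [frobInner_smul_right, frobInner_vecMulVec_right]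
  have hq : ∀ i, μ ≤ vX i ⬝ᵥ G.mulVec (vX i) := by
    intro i
    have := quad_lower hn hmuAnti hworth hGdecomp (vX i)
    rwa [hvv1 i, mul_one] at this
  have htr : (∑ i, lamX i) = 1 := by
    have := trace_of_decomp hvorth hXsdecomp
    rw [← this]
    exact hmin.1.2
  have hup : frobInner G Xstar ≤ μ := by
    rw [hGZ] at hopt; linarith
  -- sum of nonneg terms is ≤ 0 hence each is 0
  have hsum : (∑ i, lamX i * (vX i ⬝ᵥ G.mulVec (vX i) - μ)) ≤ 0 := by
    have : (∑ i, lamX i * (vX i ⬝ᵥ G.mulVec (vX i) - μ))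
        = (∑ i, lamX i * (vX i ⬝ᵥ G.mulVec (vX i))) - μ * ∑ i, lamX i := by
      rw [Finset.mul_sum, ← Finset.sum_sub_distrib]
      refine Finset.sum_congr rfl fun i _ => by ring
    rw [this, htr, ← hGXs]
    simpa using hup
  have hterm : ∀ i ∈ Finset.univ, 0 ≤ lamX i * (vX i ⬝ᵥ G.mulVec (vX i) - μ) :=
    fun i _ => mul_nonneg (hlamnn i) (by have := hq i; linarith)
  have hzero : ∀ i ∈ Finset.univ, lamX i * (vX i ⬝ᵥ G.mulVec (vX i) - μ) = 0 := by
    have hsum0 : (∑ i, lamX i * (vX i ⬝ᵥ G.mulVec (vX i) - μ)) = 0 :=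
      le_antisymm hsum (Finset.sum_nonneg hterm)
    exact (Finset.sum_eq_zero_iff_of_nonneg hterm).mp hsum0
  intro i hi
  have := hzero i (Finset.mem_univ i)
  rcases mul_eq_zero.mp this with h | h
  · exact absurd h hi
  · linarith [sub_eq_zero.mp h]

end Comp

section Rank
variable {n : ℕ}

lemma lam_last_pos {r : ℕ} (hr : 1 ≤ r) (hrn : r ≤ n)
    {Xstar : Matrix (Fin n) (Fin n) ℝ} {lamX : Fin n → ℝ} {vX : Fin n → Fin n → ℝ}
    (hlamAnti : Antitone lamX)
    (hXsdecomp : Xstar = ∑ i, lamX i • Matrix.vecMulVec (vX i) (vX i))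
    (hlamnn : ∀ i, 0 ≤ lamX i)
    (hrank : Xstar.rank = r) :
    0 < lamX ⟨r - 1, by omega⟩ := by
  have hn : 0 < n := by omega
  rcases lt_or_eq_of_le (hlamnn ⟨r - 1, by omega⟩) with h | h
  · exact h
  exfalso
  have h0 : lamX ⟨r - 1, by omega⟩ = 0 := h.symm
  have hzero : ∀ i : Fin n, r - 1 ≤ i.1 → lamX i = 0 := by
    intro i hi
    refine le_antisymm ?_ (hlamnn i)
    rw [← h0]
    exact hlamAnti (by rw [Fin.le_def]; simpa using hi)
  classical
  set b : Fin (r - 1) → (Fin n → ℝ) := fun j => vX ⟨j.1, by omega⟩ with hb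
  have hspan : LinearMap.range Xstar.mulVecLin ≤ Submodule.span ℝ (Set.range b) := by
    rintro _ ⟨q, rfl⟩
    rw [Matrix.mulVecLin_apply]
    have hXq : Xstar.mulVec q = ∑ i, (lamX i * (vX i ⬝ᵥ q)) • vX i := by
      rw [hXsdecomp, sum_mulVec]
      refine Finset.sum_congr rfl fun i _ => ?_
      rw [Matrix.smul_mulVec, vecMulVec_mulVec, smul_smul]
    rw [hXq]
    apply Submodule.sum_mem
    intro i _
    by_cases hi : lamX i = 0
    · rw [hi, zero_mul, zero_smul]
      exact Submodule.zero_mem _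
    · have hilt : i.1 < r - 1 := by
        by_contra hc
        exact hi (hzero i (by omega))
      refine Submodule.smul_mem _ _ (Submodule.subset_span ⟨⟨i.1, hilt⟩, ?_⟩)
      rw [hb]
  have hrle : Xstar.rank ≤ r - 1 := by
    have h1 : Xstar.rank ≤ Module.finrank ℝ (Submodule.span ℝ (Set.range b)) :=
      Submodule.finrank_mono hspan
    have h2 : Module.finrank ℝ (Submodule.span ℝ (Set.range b)) ≤ (Set.range b).toFinset.card :=
      finrank_span_le_card (Set.range b)
    have h3 : (Set.range b).toFinset.card ≤ r - 1 := by
      rw [Set.toFinset_card]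
      simpa using Fintype.card_range_le b
    omega
  omega

end Rank

/-- lower bound on −⟨VVᵀ, ∇̃⟩ near a rank-r optimal solution. -/
theorem stmt12 (n r : ℕ) (hr : 1 ≤ r) (hrn : r ≤ n) (hn : 1 ≤ n)
    (β ξ : ℝ) (hβ : 0 < β)
    (f : Matrix (Fin n) (Fin n) ℝ → ℝ)
    (g : Matrix (Fin n) (Fin n) ℝ → Matrix (Fin n) (Fin n) ℝ)
    (hconv : ConvexOn ℝ Set.univ f) (hgrad : IsGradient f g)
    (hsmooth : ∀ X Y, frobNorm (g X - g Y) ≤ β * frobNorm (X - Y))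
    (Xstar : Matrix (Fin n) (Fin n) ℝ)
    (hmin : IsMinimizerOn f (spectrahedron n) Xstar)
    (hrankXs : Xstar.rank = r)
    (mu : Fin n → ℝ) (w : Fin n → Fin n → ℝ)
    (hmu : IsEigenDecomp (g Xstar) mu w)
    (lamX : Fin n → ℝ) (vX : Fin n → Fin n → ℝ)
    (hlamX : IsEigenDecomp Xstar lamX vX)
    (X : Matrix (Fin n) (Fin n) ℝ)
    (hXS : X ∈ spectrahedron n) (hrankX : X.rank ≤ r)
    (V : Matrix (Fin n) (Fin r) ℝ) (horth : Vᵀ * V = 1)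
    (d : Fin r → ℝ) (hXdecomp : X = V * Matrix.diagonal d * Vᵀ)
    (D : Matrix (Fin n) (Fin n) ℝ) (hDsymm : D.IsSymm)
    (hDerr : specNorm (D - g X) ≤ ξ) :
    -((r : ℝ) * mu ⟨n - 1, by omega⟩) - (r : ℝ) * ξ -
        Real.sqrt r * frobNorm (X - Xstar) *
          (Real.sqrt r * β + 2 * Real.sqrt 2 * specNorm D / lamX ⟨r - 1, by omega⟩) ≤
      -frobInner (V * Vᵀ) D := by
  have hn0 : 0 < n := hn
  obtain ⟨hmuAnti, hworth, hGdecomp⟩ := hmu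
  obtain ⟨hlamAnti, hvorth, hXsdecomp⟩ := hlamX
  -- families
  let u : Fin r → Fin n → ℝ := fun i k => V k i
  let vv : Fin r → Fin n → ℝ := fun j => vX ⟨j.1, lt_of_lt_of_le j.2 hrn⟩
  have huorth : ∀ i j, u i ⬝ᵥ u j = if i = j then (1:ℝ) else 0 := by
    intro i j
    have h := congrFun (congrFun horth i) j
    simp only [Matrix.mul_apply, Matrix.transpose_apply, Matrix.one_apply] at h
    exact h
  have hvvorth : ∀ i j, vv i ⬝ᵥ vv j = if i = j then (1:ℝ) else 0 := by
    intro i j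
    by_cases hij : i = j
    · subst hij
      rw [if_pos rfl]
      have h := hvorth ⟨i.1, lt_of_lt_of_le i.2 hrn⟩ ⟨i.1, lt_of_lt_of_le i.2 hrn⟩
      rw [if_pos rfl] at h
      exact h
    · rw [if_neg hij]
      have hne : (⟨i.1, lt_of_lt_of_le i.2 hrn⟩ : Fin n) ≠ ⟨j.1, lt_of_lt_of_le j.2 hrn⟩ := by
        intro hc
        exact hij (Fin.ext (congrArg (fun x : Fin n => x.1) hc))
      have h := hvorth ⟨i.1, lt_of_lt_of_le i.2 hrn⟩ ⟨j.1, lt_of_lt_of_le j.2 hrn⟩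
      rw [if_neg hne] at h
      exact h
  have hu1 : ∀ i, u i ⬝ᵥ u i = 1 := by
    intro i; rw [huorth i i, if_pos rfl]
  have hvv1 : ∀ j, vv j ⬝ᵥ vv j = 1 := by
    intro j; rw [hvvorth j j, if_pos rfl]
  -- projection matrices
  have hVVt : V * Vᵀ = ∑ i, Matrix.vecMulVec (u i) (u i) := by
    ext k l
    simp only [Matrix.mul_apply, Matrix.transpose_apply, Matrix.sum_apply,
      Matrix.vecMulVec_apply, u]
  have hfrobP : ∀ E : Matrix (Fin n) (Fin n) ℝ,
      frobInner (V * Vᵀ) E = ∑ i, u i ⬝ᵥ E.mulVec (u i) := by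
    intro E
    rw [hVVt, frobInner_sum_left]
    simp only [frobInner_vecMulVec_left]
  have hfrobPs : ∀ E : Matrix (Fin n) (Fin n) ℝ,
      frobInner (∑ j, Matrix.vecMulVec (vv j) (vv j)) E = ∑ j, vv j ⬝ᵥ E.mulVec (vv j) := by
    intro E
    rw [frobInner_sum_left]
    simp only [frobInner_vecMulVec_left]
  -- complementarity and rank
  obtain ⟨hlamnn, hcomp⟩ := comp_mu hn0 hgrad hmin ⟨hmuAnti, hworth, hGdecomp⟩
    ⟨hlamAnti, hvorth, hXsdecomp⟩
  have hlampos : 0 < lamX ⟨r - 1, by omega⟩ :=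
    lam_last_pos hr hrn hlamAnti hXsdecomp hlamnn hrankXs
  have hlamposj : ∀ j : Fin r, 0 < lamX ⟨j.1, lt_of_lt_of_le j.2 hrn⟩ := by
    intro j
    refine lt_of_lt_of_le hlampos (hlamAnti ?_)
    rw [Fin.le_def]
    simp only
    omega
  have hlamlej : ∀ j : Fin r, lamX ⟨r - 1, by omega⟩ ≤ lamX ⟨j.1, lt_of_lt_of_le j.2 hrn⟩ := by
    intro j
    refine hlamAnti ?_
    rw [Fin.le_def]
    simp only
    omega
  -- T4
  have hT4 : (∑ j, vv j ⬝ᵥ (g Xstar).mulVec (vv j)) = (r:ℝ) * mu ⟨n - 1, by omega⟩ := by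
    have hj : ∀ j : Fin r, vv j ⬝ᵥ (g Xstar).mulVec (vv j) = mu ⟨n - 1, by omega⟩ :=
      fun j => hcomp _ (ne_of_gt (hlamposj j))
    rw [Finset.sum_congr rfl fun j _ => hj j]
    simp [mul_comm]
  -- T2
  have hT2 : (∑ j, vv j ⬝ᵥ (D - g X).mulVec (vv j)) ≤ (r:ℝ) * ξ := by
    have hb : ∀ j : Fin r, vv j ⬝ᵥ (D - g X).mulVec (vv j) ≤ ξ := by
      intro j
      have h := dot_mulVec_le' hn0 (D - g X) (vv j) (vv j)
      rw [hvv1 j, Real.sqrt_one, mul_one, mul_one] at h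
      exact le_trans h hDerr
    calc (∑ j, vv j ⬝ᵥ (D - g X).mulVec (vv j)) ≤ ∑ _j : Fin r, ξ :=
          Finset.sum_le_sum fun j _ => hb j
      _ = (r:ℝ) * ξ := by simp [mul_comm]
  -- T3
  have hPsnorm : frobNorm (∑ j, Matrix.vecMulVec (vv j) (vv j)) = Real.sqrt r := by
    have h1 : (∑ i, ∑ j, ((∑ k, Matrix.vecMulVec (vv k) (vv k)) i j) ^ 2) = (r:ℝ) := by
      rw [← frobInner_self, hfrobPs]
      have hfix : ∀ j, (∑ k, Matrix.vecMulVec (vv k) (vv k)).mulVec (vv j) = vv j :=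
        fun j => projMat_mulVec hvvorth j
      rw [Finset.sum_congr rfl fun j _ => by rw [hfix j, hvv1 j]]
      simp
    rw [frobNorm, h1]
  have hT3 : frobInner (∑ j, Matrix.vecMulVec (vv j) (vv j)) (g X - g Xstar)
      ≤ Real.sqrt r * (β * frobNorm (X - Xstar)) := by
    calc frobInner (∑ j, Matrix.vecMulVec (vv j) (vv j)) (g X - g Xstar)
        ≤ frobNorm (∑ j, Matrix.vecMulVec (vv j) (vv j)) * frobNorm (g X - g Xstar) :=
          frobInner_le _ _
      _ ≤ Real.sqrt r * (β * frobNorm (X - Xstar)) := by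
          rw [hPsnorm]
          exact mul_le_mul_of_nonneg_left (hsmooth X Xstar) (Real.sqrt_nonneg _)
  -- T1 : residual quantities
  have hs0 : 0 ≤ specNorm D := specNorm_nonneg hn0 D
  have hNw_eq : ∀ i, (u i - ∑ j, (vv j ⬝ᵥ u i) • vv j) ⬝ᵥ (u i - ∑ j, (vv j ⬝ᵥ u i) • vv j)
      = 1 - ∑ j, (vv j ⬝ᵥ u i) ^ 2 := by
    intro i
    rw [resid_norm hvvorth (u i), hu1 i]
  have hNz_eq : ∀ j, (vv j - ∑ i, (u i ⬝ᵥ vv j) • u i) ⬝ᵥ (vv j - ∑ i, (u i ⬝ᵥ vv j) • u i)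
      = 1 - ∑ i, (u i ⬝ᵥ vv j) ^ 2 := by
    intro j
    rw [resid_norm huorth (vv j), hvv1 j]
  have hNwz : (∑ i, (u i - ∑ j, (vv j ⬝ᵥ u i) • vv j) ⬝ᵥ (u i - ∑ j, (vv j ⬝ᵥ u i) • vv j))
      = ∑ j, (vv j - ∑ i, (u i ⬝ᵥ vv j) • u i) ⬝ᵥ (vv j - ∑ i, (u i ⬝ᵥ vv j) • u i) := by
    rw [Finset.sum_congr rfl fun i _ => hNw_eq i, Finset.sum_congr rfl fun j _ => hNz_eq j]
    rw [Finset.sum_sub_distrib, Finset.sum_sub_distrib]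
    congr 1
    rw [Finset.sum_comm]
    exact Finset.sum_congr rfl fun j _ => Finset.sum_congr rfl fun i _ => by
      rw [dotProduct_comm]
  -- Davis-Kahan bound
  have hDK : (∑ j, (vv j - ∑ i, (u i ⬝ᵥ vv j) • u i) ⬝ᵥ (vv j - ∑ i, (u i ⬝ᵥ vv j) • u i))
      ≤ (frobNorm (X - Xstar) / lamX ⟨r - 1, by omega⟩) ^ 2 := by
    -- X as a sum of rank-one matrices over u
    have hX2 : X = ∑ i, d i • Matrix.vecMulVec (u i) (u i) := by
      rw [hXdecomp]
      ext k l
      rw [Matrix.mul_apply]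
      simp only [Matrix.mul_diagonal, Matrix.transpose_apply, Matrix.sum_apply,
        Matrix.smul_apply, Matrix.vecMulVec_apply, smul_eq_mul, u]
      exact Finset.sum_congr rfl fun i _ => by ring
    have hXq : ∀ y, X.mulVec y = ∑ i, (d i * (u i ⬝ᵥ y)) • u i := by
      intro y
      rw [hX2, sum_mulVec]
      refine Finset.sum_congr rfl fun i _ => ?_
      rw [Matrix.smul_mulVec, vecMulVec_mulVec, smul_smul]
    have hperj : ∀ j : Fin r,
        (lamX ⟨r - 1, by omega⟩) ^ 2 *
          ((vv j - ∑ i, (u i ⬝ᵥ vv j) • u i) ⬝ᵥ (vv j - ∑ i, (u i ⬝ᵥ vv j) • u i))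
        ≤ ((Xstar - X).mulVec (vv j)) ⬝ᵥ ((Xstar - X).mulVec (vv j)) := by
      intro j
      set lj := lamX ⟨j.1, lt_of_lt_of_le j.2 hrn⟩ with hlj
      set z := vv j - ∑ i, (u i ⬝ᵥ vv j) • u i with hz
      set m := (Xstar - X).mulVec (vv j) with hm
      have heigj : Xstar.mulVec (vv j) = lj • vv j :=
        eigen_of_decomp hvorth hXsdecomp ⟨j.1, lt_of_lt_of_le j.2 hrn⟩
      have hannih : (∑ i, (u i ⬝ᵥ X.mulVec (vv j)) • u i) = X.mulVec (vv j) := by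
        conv_lhs => rw [hXq (vv j)]
        rw [proj_fixes huorth]
        exact (hXq (vv j)).symm
      have hkey : lj • z = m - ∑ i, (u i ⬝ᵥ m) • u i := by
        rw [hm, Matrix.sub_mulVec, heigj, hz]
        rw [smul_sub]
        have hdot : ∀ i : Fin r, (u i ⬝ᵥ (lj • vv j - X.mulVec (vv j))) • u i
            = (lj * (u i ⬝ᵥ vv j)) • u i - (u i ⬝ᵥ X.mulVec (vv j)) • u i := by
          intro i
          rw [dotProduct_sub, dotProduct_smul, sub_smul, smul_eq_mul]
        rw [Finset.sum_congr rfl fun i _ => hdot i, Finset.sum_sub_distrib, hannih]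
        have hsmul : (∑ i, (lj * (u i ⬝ᵥ vv j)) • u i) = lj • ∑ i, (u i ⬝ᵥ vv j) • u i := by
          rw [Finset.smul_sum]
          exact Finset.sum_congr rfl fun i _ => by rw [smul_smul]
        rw [hsmul]
        abel
      have hres : (lj • z) ⬝ᵥ (lj • z) ≤ m ⬝ᵥ m := by
        rw [hkey, resid_norm huorth m]
        have : (0:ℝ) ≤ ∑ i, (u i ⬝ᵥ m) ^ 2 := by positivity
        linarith
      have hsq : (lj • z) ⬝ᵥ (lj • z) = lj ^ 2 * (z ⬝ᵥ z) := by
        rw [smul_dotProduct, dotProduct_smul, smul_eq_mul, smul_eq_mul, sq]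
        ring
      have hzn : 0 ≤ z ⬝ᵥ z := dot_self_nonneg z
      have hlj2 : (lamX ⟨r - 1, by omega⟩) ^ 2 ≤ lj ^ 2 := by
        have h1 := hlamlej j
        have h2 := hlampos
        nlinarith
      calc (lamX ⟨r - 1, by omega⟩) ^ 2 * (z ⬝ᵥ z) ≤ lj ^ 2 * (z ⬝ᵥ z) :=
            mul_le_mul_of_nonneg_right hlj2 hzn
        _ = (lj • z) ⬝ᵥ (lj • z) := hsq.symm
        _ ≤ m ⬝ᵥ m := hres
    -- sum over j and Parseval
    have hsum1 : (lamX ⟨r - 1, by omega⟩) ^ 2 *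
        (∑ j, (vv j - ∑ i, (u i ⬝ᵥ vv j) • u i) ⬝ᵥ (vv j - ∑ i, (u i ⬝ᵥ vv j) • u i))
        ≤ ∑ j : Fin r, ((Xstar - X).mulVec (vv j)) ⬝ᵥ ((Xstar - X).mulVec (vv j)) := by
      rw [Finset.mul_sum]
      exact Finset.sum_le_sum fun j _ => hperj j
    have hsum2 : (∑ j : Fin r, ((Xstar - X).mulVec (vv j)) ⬝ᵥ ((Xstar - X).mulVec (vv j)))
        ≤ ∑ i : Fin n, ((Xstar - X).mulVec (vX i)) ⬝ᵥ ((Xstar - X).mulVec (vX i)) := by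
      exact sum_emb_le hrn (fun i => ((Xstar - X).mulVec (vX i)) ⬝ᵥ ((Xstar - X).mulVec (vX i)))
        (fun i => dot_self_nonneg _)
    have hsum3 : (∑ i : Fin n, ((Xstar - X).mulVec (vX i)) ⬝ᵥ ((Xstar - X).mulVec (vX i)))
        = frobNorm (X - Xstar) ^ 2 := by
      rw [matParseval hvorth (Xstar - X), sq_frobNorm]
      refine Finset.sum_congr rfl fun j _ => Finset.sum_congr rfl fun k _ => ?_
      rw [Matrix.sub_apply, Matrix.sub_apply]
      ring
    have hlam2pos : 0 < (lamX ⟨r - 1, by omega⟩) ^ 2 := pow_pos hlampos 2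
    rw [div_pow]
    rw [le_div_iff₀ hlam2pos]
    calc (∑ j, (vv j - ∑ i, (u i ⬝ᵥ vv j) • u i) ⬝ᵥ (vv j - ∑ i, (u i ⬝ᵥ vv j) • u i)) *
          (lamX ⟨r - 1, by omega⟩) ^ 2
        = (lamX ⟨r - 1, by omega⟩) ^ 2 *
          (∑ j, (vv j - ∑ i, (u i ⬝ᵥ vv j) • u i) ⬝ᵥ (vv j - ∑ i, (u i ⬝ᵥ vv j) • u i)) := by
          ring
      _ ≤ frobNorm (X - Xstar) ^ 2 := by
          rw [← hsum3]
          exact le_trans hsum1 hsum2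
  -- bound T1
  have hT1 : (∑ i, u i ⬝ᵥ D.mulVec (u i)) - (∑ j, vv j ⬝ᵥ D.mulVec (vv j))
      ≤ 2 * specNorm D * Real.sqrt r *
        (frobNorm (X - Xstar) / lamX ⟨r - 1, by omega⟩) := by
    have hFl : 0 ≤ frobNorm (X - Xstar) / lamX ⟨r - 1, by omega⟩ :=
      div_nonneg (frobNorm_nonneg _) hlampos.le
    have hsqrtNz : Real.sqrt (∑ j, (vv j - ∑ i, (u i ⬝ᵥ vv j) • u i) ⬝ᵥ
          (vv j - ∑ i, (u i ⬝ᵥ vv j) • u i))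
        ≤ frobNorm (X - Xstar) / lamX ⟨r - 1, by omega⟩ := by
      have := Real.sqrt_le_sqrt hDK
      rwa [Real.sqrt_sq hFl] at this
    rw [split_sum hDsymm u vv]
    have hA : (∑ i, (u i - ∑ j, (vv j ⬝ᵥ u i) • vv j) ⬝ᵥ D.mulVec (u i))
        ≤ specNorm D * (Real.sqrt r *
          Real.sqrt (∑ j, (vv j - ∑ i, (u i ⬝ᵥ vv j) • u i) ⬝ᵥ
            (vv j - ∑ i, (u i ⬝ᵥ vv j) • u i))) := by
      have hterm : ∀ i : Fin r, (u i - ∑ j, (vv j ⬝ᵥ u i) • vv j) ⬝ᵥ D.mulVec (u i)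
          ≤ specNorm D * Real.sqrt ((u i - ∑ j, (vv j ⬝ᵥ u i) • vv j) ⬝ᵥ
            (u i - ∑ j, (vv j ⬝ᵥ u i) • vv j)) := by
        intro i
        have h := dot_mulVec_le' hn0 D (u i - ∑ j, (vv j ⬝ᵥ u i) • vv j) (u i)
        rwa [hu1 i, Real.sqrt_one, mul_one] at h
      calc (∑ i, (u i - ∑ j, (vv j ⬝ᵥ u i) • vv j) ⬝ᵥ D.mulVec (u i))
          ≤ ∑ i, specNorm D * Real.sqrt ((u i - ∑ j, (vv j ⬝ᵥ u i) • vv j) ⬝ᵥ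
              (u i - ∑ j, (vv j ⬝ᵥ u i) • vv j)) := Finset.sum_le_sum fun i _ => hterm i
        _ = specNorm D * ∑ i, Real.sqrt ((u i - ∑ j, (vv j ⬝ᵥ u i) • vv j) ⬝ᵥ
              (u i - ∑ j, (vv j ⬝ᵥ u i) • vv j)) := by rw [Finset.mul_sum]
        _ ≤ specNorm D * (Real.sqrt r * Real.sqrt (∑ i,
              (u i - ∑ j, (vv j ⬝ᵥ u i) • vv j) ⬝ᵥ (u i - ∑ j, (vv j ⬝ᵥ u i) • vv j))) := by
            apply mul_le_mul_of_nonneg_left _ hs0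
            exact sum_sqrt_le _ (fun i => dot_self_nonneg _)
        _ = specNorm D * (Real.sqrt r * Real.sqrt (∑ j,
              (vv j - ∑ i, (u i ⬝ᵥ vv j) • u i) ⬝ᵥ (vv j - ∑ i, (u i ⬝ᵥ vv j) • u i))) := by
            rw [hNwz]
    have hB : -(∑ j, (vv j - ∑ i, (u i ⬝ᵥ vv j) • u i) ⬝ᵥ D.mulVec (vv j))
        ≤ specNorm D * (Real.sqrt r *
          Real.sqrt (∑ j, (vv j - ∑ i, (u i ⬝ᵥ vv j) • u i) ⬝ᵥ
            (vv j - ∑ i, (u i ⬝ᵥ vv j) • u i))) := by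
      have hterm : ∀ j : Fin r, -((vv j - ∑ i, (u i ⬝ᵥ vv j) • u i) ⬝ᵥ D.mulVec (vv j))
          ≤ specNorm D * Real.sqrt ((vv j - ∑ i, (u i ⬝ᵥ vv j) • u i) ⬝ᵥ
            (vv j - ∑ i, (u i ⬝ᵥ vv j) • u i)) := by
        intro j
        have h := dot_mulVec_le' hn0 D (-(vv j - ∑ i, (u i ⬝ᵥ vv j) • u i)) (vv j)
        rw [hvv1 j, Real.sqrt_one, mul_one, neg_dotProduct] at h
        rwa [show (-(vv j - ∑ i, (u i ⬝ᵥ vv j) • u i)) ⬝ᵥ (-(vv j - ∑ i, (u i ⬝ᵥ vv j) • u i))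
            = (vv j - ∑ i, (u i ⬝ᵥ vv j) • u i) ⬝ᵥ (vv j - ∑ i, (u i ⬝ᵥ vv j) • u i) by
          rw [neg_dotProduct, dotProduct_neg, neg_neg]] at h
      calc -(∑ j, (vv j - ∑ i, (u i ⬝ᵥ vv j) • u i) ⬝ᵥ D.mulVec (vv j))
          = ∑ j, -((vv j - ∑ i, (u i ⬝ᵥ vv j) • u i) ⬝ᵥ D.mulVec (vv j)) := by
            rw [Finset.sum_neg_distrib]
        _ ≤ ∑ j, specNorm D * Real.sqrt ((vv j - ∑ i, (u i ⬝ᵥ vv j) • u i) ⬝ᵥ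
              (vv j - ∑ i, (u i ⬝ᵥ vv j) • u i)) := Finset.sum_le_sum fun j _ => hterm j
        _ = specNorm D * ∑ j, Real.sqrt ((vv j - ∑ i, (u i ⬝ᵥ vv j) • u i) ⬝ᵥ
              (vv j - ∑ i, (u i ⬝ᵥ vv j) • u i)) := by rw [Finset.mul_sum]
        _ ≤ specNorm D * (Real.sqrt r * Real.sqrt (∑ j,
              (vv j - ∑ i, (u i ⬝ᵥ vv j) • u i) ⬝ᵥ (vv j - ∑ i, (u i ⬝ᵥ vv j) • u i))) := by
            apply mul_le_mul_of_nonneg_left _ hs0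
            exact sum_sqrt_le _ (fun j => dot_self_nonneg _)
    have hsr : 0 ≤ specNorm D * Real.sqrt r := mul_nonneg hs0 (Real.sqrt_nonneg _)
    have hcomb := add_le_add hA hB
    have hfin : specNorm D * (Real.sqrt r *
        Real.sqrt (∑ j, (vv j - ∑ i, (u i ⬝ᵥ vv j) • u i) ⬝ᵥ
          (vv j - ∑ i, (u i ⬝ᵥ vv j) • u i)))
        ≤ specNorm D * Real.sqrt r * (frobNorm (X - Xstar) / lamX ⟨r - 1, by omega⟩) := by
      rw [mul_assoc]
      exact mul_le_mul_of_nonneg_left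
        (mul_le_mul_of_nonneg_left hsqrtNz (Real.sqrt_nonneg _)) hs0
    linarith
  -- assemble
  have hdecompPs : frobInner (∑ j, Matrix.vecMulVec (vv j) (vv j)) D
      = frobInner (∑ j, Matrix.vecMulVec (vv j) (vv j)) (D - g X)
        + frobInner (∑ j, Matrix.vecMulVec (vv j) (vv j)) (g X - g Xstar)
        + frobInner (∑ j, Matrix.vecMulVec (vv j) (vv j)) (g Xstar) := by
    rw [frobInner_sub_right, frobInner_sub_right]
    ring
  have hPsD : frobInner (∑ j, Matrix.vecMulVec (vv j) (vv j)) D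
      = ∑ j, vv j ⬝ᵥ D.mulVec (vv j) := hfrobPs D
  have hPsDgX : frobInner (∑ j, Matrix.vecMulVec (vv j) (vv j)) (D - g X)
      = ∑ j, vv j ⬝ᵥ (D - g X).mulVec (vv j) := hfrobPs (D - g X)
  have hPsG : frobInner (∑ j, Matrix.vecMulVec (vv j) (vv j)) (g Xstar)
      = ∑ j, vv j ⬝ᵥ (g Xstar).mulVec (vv j) := hfrobPs (g Xstar)
  have hmain : frobInner (V * Vᵀ) D
      ≤ (r:ℝ) * mu ⟨n - 1, by omega⟩ + (r:ℝ) * ξ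
        + 2 * specNorm D * Real.sqrt r * (frobNorm (X - Xstar) / lamX ⟨r - 1, by omega⟩)
        + Real.sqrt r * (β * frobNorm (X - Xstar)) := by
    rw [hfrobP D]
    have e1 : (∑ i, u i ⬝ᵥ D.mulVec (u i))
        = ((∑ i, u i ⬝ᵥ D.mulVec (u i)) - (∑ j, vv j ⬝ᵥ D.mulVec (vv j)))
          + frobInner (∑ j, Matrix.vecMulVec (vv j) (vv j)) D := by
      rw [hPsD]; ring
    rw [e1, hdecompPs, hPsDgX, hPsG, hT4]
    linarith [hT1, hT2, hT3]
  -- final numeric comparison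
  have hR2 : Real.sqrt r * Real.sqrt r = (r:ℝ) := Real.mul_self_sqrt (by positivity)
  have hRr : Real.sqrt r ≤ (r:ℝ) := by
    have h1 : ((r:ℝ)) ≤ (r:ℝ) * (r:ℝ) := by
      have h2 : (1:ℝ) ≤ (r:ℝ) := by exact_mod_cast hr
      nlinarith
    calc Real.sqrt r ≤ Real.sqrt ((r:ℝ) * (r:ℝ)) := Real.sqrt_le_sqrt h1
      _ = (r:ℝ) := Real.sqrt_mul_self (by positivity)
  have hsqrt2 : (1:ℝ) ≤ Real.sqrt 2 := by
    rw [show (1:ℝ) = Real.sqrt 1 from (Real.sqrt_one).symm]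
    exact Real.sqrt_le_sqrt (by norm_num)
  have hF0 : 0 ≤ frobNorm (X - Xstar) := frobNorm_nonneg _
  have hFl : 0 ≤ frobNorm (X - Xstar) / lamX ⟨r - 1, by omega⟩ :=
    div_nonneg hF0 hlampos.le
  have hCle : Real.sqrt r * (β * frobNorm (X - Xstar))
      + 2 * specNorm D * Real.sqrt r * (frobNorm (X - Xstar) / lamX ⟨r - 1, by omega⟩)
      ≤ Real.sqrt r * frobNorm (X - Xstar) *
        (Real.sqrt r * β + 2 * Real.sqrt 2 * specNorm D / lamX ⟨r - 1, by omega⟩) := by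
    have e : Real.sqrt r * frobNorm (X - Xstar) *
        (Real.sqrt r * β + 2 * Real.sqrt 2 * specNorm D / lamX ⟨r - 1, by omega⟩)
        = (Real.sqrt r * Real.sqrt r) * (β * frobNorm (X - Xstar))
          + Real.sqrt 2 * (2 * specNorm D * Real.sqrt r *
            (frobNorm (X - Xstar) / lamX ⟨r - 1, by omega⟩)) := by
      ring
    rw [e, hR2]
    have h1 : Real.sqrt r * (β * frobNorm (X - Xstar))
        ≤ (r:ℝ) * (β * frobNorm (X - Xstar)) :=
      mul_le_mul_of_nonneg_right hRr (mul_nonneg hβ.le hF0)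
    have hq : 0 ≤ 2 * specNorm D * Real.sqrt r *
        (frobNorm (X - Xstar) / lamX ⟨r - 1, by omega⟩) :=
      mul_nonneg (mul_nonneg (mul_nonneg (by norm_num) hs0) (Real.sqrt_nonneg _)) hFl
    have h2 : 2 * specNorm D * Real.sqrt r *
          (frobNorm (X - Xstar) / lamX ⟨r - 1, by omega⟩)
        ≤ Real.sqrt 2 * (2 * specNorm D * Real.sqrt r *
          (frobNorm (X - Xstar) / lamX ⟨r - 1, by omega⟩)) :=
      le_mul_of_one_le_left hq hsqrt2
    linarith
  linarith [hmain, hCle]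


end LRSGD
end

section
/- Let f : 𝕊^n → ℝ be convex and β-smooth, let X* be a minimizer of f over S_n with rank(X*) = r (1 ≤ r < n), let μ_1 ≥ ... ≥ μ_n be the eigenvalues of ∇f(X*), and set δ = μ_{n−r} − μ_n. Let X ∈ S_n and let ∇̃ ∈ 𝕊^n satisfy ‖∇̃ − ∇f(X)‖ ≤ ξ (spectral norm). Then −Σ_{i=1}^{r+1} λ_{n−i+1}(∇̃) ≤ −((r+1)μ_n + δ) + (r+1)(ξ + β‖X − X*‖_F). -/
open scoped BigOperators
open MeasureTheory
open scoped Matrix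

namespace LRSGD

/-! ### Auxiliary material -/

noncomputable def auxToE {n : ℕ} (u : Fin n → ℝ) : EuclideanSpace ℝ (Fin n) :=
  (WithLp.equiv 2 (Fin n → ℝ)).symm u

lemma aux_norm_toE {n : ℕ} (u : Fin n → ℝ) : ‖auxToE u‖ = Real.sqrt (∑ i, u i ^ 2) := by
  rw [EuclideanSpace.norm_eq]
  congr 1
  refine Finset.sum_congr rfl fun i _ => ?_
  rw [Real.norm_eq_abs, sq_abs]; rfl

lemma aux_inner_toE {n : ℕ} (u v : Fin n → ℝ) :
    (inner ℝ (auxToE u) (auxToE v) : ℝ) = ∑ i, u i * v i := by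
  simp [auxToE, PiLp.inner_apply, RCLike.inner_apply, mul_comm]

noncomputable def auxQ {n : ℕ} (M : Matrix (Fin n) (Fin n) ℝ) (u : Fin n → ℝ) : ℝ :=
  ∑ i, ∑ j, u i * (M i j * u j)

lemma aux_q_eq_inner {n : ℕ} (M : Matrix (Fin n) (Fin n) ℝ) (u : Fin n → ℝ) :
    auxQ M u = (inner ℝ (auxToE u) (auxToE (M.mulVec u)) : ℝ) := by
  rw [aux_inner_toE, auxQ]
  refine Finset.sum_congr rfl fun i _ => ?_
  simp [Matrix.mulVec, dotProduct, Finset.mul_sum]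

lemma aux_q_sub {n : ℕ} (A B : Matrix (Fin n) (Fin n) ℝ) (u : Fin n → ℝ) :
    auxQ (A - B) u = auxQ A u - auxQ B u := by
  simp [auxQ, Matrix.sub_apply, sub_mul, mul_sub, Finset.sum_sub_distrib]

lemma aux_triple_swap {n m : ℕ} (F : Fin n → Fin n → Fin m → ℝ) :
    (∑ i, ∑ j, ∑ k, F i j k) = ∑ k, ∑ i, ∑ j, F i j k := by
  calc (∑ i, ∑ j, ∑ k, F i j k) = ∑ i, ∑ k, ∑ j, F i j k :=
        Finset.sum_congr rfl fun i _ => Finset.sum_comm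
    _ = ∑ k, ∑ i, ∑ j, F i j k := Finset.sum_comm

lemma aux_triple_swap2 {n m : ℕ} (F : Fin m → Fin n → Fin n → ℝ) :
    (∑ i, ∑ j, ∑ k, F i j k) = ∑ j, ∑ k, ∑ i, F i j k := by
  calc (∑ i, ∑ j, ∑ k, F i j k) = ∑ j, ∑ i, ∑ k, F i j k := Finset.sum_comm
    _ = ∑ j, ∑ k, ∑ i, F i j k := Finset.sum_congr rfl fun j _ => Finset.sum_comm

lemma aux_q_decomp {n : ℕ} (lam : Fin n → ℝ) (w : Fin n → Fin n → ℝ) (u : Fin n → ℝ) :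
    auxQ (∑ j, lam j • Matrix.vecMulVec (w j) (w j)) u
      = ∑ m, lam m * (∑ k, w m k * u k) ^ 2 := by
  have hM : ∀ i j, (∑ m, lam m • Matrix.vecMulVec (w m) (w m)) i j
      = ∑ m, lam m * (w m i * w m j) := by
    intro i j
    simp [Matrix.sum_apply, Matrix.vecMulVec_apply]
  have key : ∀ m, lam m * (∑ k, w m k * u k) ^ 2
      = ∑ i, ∑ j, u i * (lam m * (w m i * w m j) * u j) := by
    intro m
    rw [sq, Finset.sum_mul_sum, Finset.mul_sum]
    refine Finset.sum_congr rfl fun i _ => ?_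
    rw [Finset.mul_sum]
    refine Finset.sum_congr rfl fun j _ => ?_
    ring
  calc auxQ (∑ j, lam j • Matrix.vecMulVec (w j) (w j)) u
      = ∑ i, ∑ j, ∑ m, u i * (lam m * (w m i * w m j) * u j) := by
        simp only [auxQ, hM, Finset.sum_mul, Finset.mul_sum]
    _ = ∑ m, ∑ i, ∑ j, u i * (lam m * (w m i * w m j) * u j) := aux_triple_swap _
    _ = ∑ m, lam m * (∑ k, w m k * u k) ^ 2 :=
        Finset.sum_congr rfl fun m _ => (key m).symm

lemma aux_parseval {n : ℕ} (w : Fin n → Fin n → ℝ)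
    (h : ∀ i j, (∑ k, w i k * w j k) = if i = j then (1 : ℝ) else 0) (u : Fin n → ℝ) :
    ∑ j, (∑ k, w j k * u k) ^ 2 = ∑ k, u k ^ 2 := by
  have hW : (Matrix.of w) * (Matrix.of w)ᵀ = 1 := by
    ext i j
    simpa [Matrix.mul_apply, Matrix.one_apply] using h i j
  have hW' := mul_eq_one_comm.mp hW
  have hcol : ∀ k l, (∑ j, w j k * w j l) = if k = l then (1 : ℝ) else 0 := by
    intro k l
    have := congrFun (congrFun hW' k) l
    simpa [Matrix.mul_apply, Matrix.one_apply] using this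
  calc ∑ j, (∑ k, w j k * u k) ^ 2
      = ∑ j, ∑ k, ∑ l, (w j k * u k) * (w j l * u l) := by
        refine Finset.sum_congr rfl fun j _ => ?_
        rw [sq, Finset.sum_mul_sum]
    _ = ∑ k, ∑ l, ∑ j, (w j k * u k) * (w j l * u l) := aux_triple_swap2 _
    _ = ∑ k, ∑ l, (∑ j, w j k * w j l) * (u k * u l) := by
        refine Finset.sum_congr rfl fun k _ => Finset.sum_congr rfl fun l _ => ?_
        rw [Finset.sum_mul]
        exact Finset.sum_congr rfl fun j _ => by ring
    _ = ∑ k, u k ^ 2 := by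
        simp [hcol, ite_mul, Finset.sum_ite_eq, sq]

lemma aux_mulVec_sq_le_frob {n : ℕ} (A : Matrix (Fin n) (Fin n) ℝ) (u : Fin n → ℝ)
    (hu : ∑ k, u k ^ 2 = 1) :
    Real.sqrt (∑ i, (A.mulVec u i) ^ 2) ≤ Real.sqrt (∑ i, ∑ j, (A i j) ^ 2) := by
  apply Real.sqrt_le_sqrt
  calc ∑ i, (A.mulVec u i) ^ 2
      ≤ ∑ i, (∑ j, A i j ^ 2) * (∑ j, u j ^ 2) := by
        refine Finset.sum_le_sum fun i _ => ?_
        have := Finset.sum_mul_sq_le_sq_mul_sq Finset.univ (fun j => A i j) u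
        simpa [Matrix.mulVec, dotProduct] using this
    _ = ∑ i, ∑ j, A i j ^ 2 := by simp [hu]

lemma aux_lp_lemma {n : ℕ} (mu : Fin n → ℝ) (hmu : Antitone mu) (c : Fin n) (t : Fin n → ℝ)
    (ht0 : ∀ j, 0 ≤ t j) (ht1 : ∀ j, t j ≤ 1)
    (hsum : ∑ j, t j = ((Finset.Ici c).card : ℝ)) :
    ∑ j ∈ Finset.Ici c, mu j ≤ ∑ j, mu j * t j := by
  classical
  set F := Finset.Ici (a := c) with hF
  have hsplit : ∑ j, mu j * t j = ∑ j ∈ F, mu j * t j + ∑ j ∈ Fᶜ, mu j * t j :=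
    (Finset.sum_add_sum_compl F _).symm
  have hts : ∑ j ∈ F, t j + ∑ j ∈ Fᶜ, t j = (F.card : ℝ) := by
    rw [Finset.sum_add_sum_compl]; exact hsum
  have h1 : ∑ j ∈ F, mu j - ∑ j ∈ F, mu j * t j ≤ mu c * ∑ j ∈ F, (1 - t j) := by
    rw [← Finset.sum_sub_distrib, Finset.mul_sum]
    refine Finset.sum_le_sum fun j hj => ?_
    have hcj : c ≤ j := Finset.mem_Ici.mp hj
    have hmc : mu j ≤ mu c := hmu hcj
    have h1t : 0 ≤ 1 - t j := by linarith [ht1 j]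
    calc mu j - mu j * t j = mu j * (1 - t j) := by ring
      _ ≤ mu c * (1 - t j) := mul_le_mul_of_nonneg_right hmc h1t
  have h2 : mu c * ∑ j ∈ Fᶜ, t j ≤ ∑ j ∈ Fᶜ, mu j * t j := by
    rw [Finset.mul_sum]
    refine Finset.sum_le_sum fun j hj => ?_
    have hjc : j < c := by
      have := Finset.mem_compl.mp hj
      simpa [hF, Finset.mem_Ici, not_le] using this
    exact mul_le_mul_of_nonneg_right (hmu hjc.le) (ht0 j)
  have heq : ∑ j ∈ F, (1 - t j) = ∑ j ∈ Fᶜ, t j := by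
    rw [Finset.sum_sub_distrib, Finset.sum_const, nsmul_eq_mul, mul_one]
    linarith
  linarith [h1.trans (le_of_eq (by rw [heq])), h2]

lemma aux_bessel {n m : ℕ} (v : Fin m → Fin n → ℝ)
    (hv : ∀ i j, (∑ k, v i k * v j k) = if i = j then (1 : ℝ) else 0)
    (x : Fin n → ℝ) (hx : ∑ k, x k ^ 2 = 1) :
    ∑ i, (∑ k, v i k * x k) ^ 2 ≤ 1 := by
  have ho : Orthonormal ℝ (fun i => auxToE (v i)) := by
    rw [orthonormal_iff_ite]
    intro i j
    rw [aux_inner_toE]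
    simp [hv i j]
  have hb := ho.sum_inner_products_le (s := Finset.univ) (auxToE x)
  have hL : ∑ i, ‖(inner ℝ (auxToE (v i)) (auxToE x) : ℝ)‖ ^ 2
      = ∑ i, (∑ k, v i k * x k) ^ 2 := by
    refine Finset.sum_congr rfl fun i _ => ?_
    rw [aux_inner_toE, Real.norm_eq_abs, sq_abs]
  have hR : ‖auxToE x‖ ^ 2 = 1 := by
    rw [aux_norm_toE, Real.sq_sqrt (Finset.sum_nonneg fun k _ => sq_nonneg _), hx]
  rw [hL, hR] at hb
  exact hb

lemma aux_kyfan {n m : ℕ} (mu : Fin n → ℝ) (hmu : Antitone mu) (c : Fin n)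
    (hcard : (Finset.Ici c).card = m)
    (w : Fin n → Fin n → ℝ)
    (hw : ∀ i j, (∑ k, w i k * w j k) = if i = j then (1 : ℝ) else 0)
    (v : Fin m → Fin n → ℝ)
    (hv : ∀ i j, (∑ k, v i k * v j k) = if i = j then (1 : ℝ) else 0) :
    ∑ j ∈ Finset.Ici c, mu j ≤ ∑ i : Fin m, ∑ p, mu p * (∑ k, w p k * v i k) ^ 2 := by
  classical
  set tfun : Fin n → ℝ := fun p => ∑ i : Fin m, (∑ k, w p k * v i k) ^ 2 with htfun
  have hwunit : ∀ a, ∑ k, w a k ^ 2 = 1 := fun a => by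
    have := hw a a; simpa [sq] using this
  have hvunit : ∀ a, ∑ k, v a k ^ 2 = 1 := fun a => by
    have := hv a a; simpa [sq] using this
  have ht0 : ∀ p, 0 ≤ tfun p := fun p => Finset.sum_nonneg fun i _ => sq_nonneg _
  have ht1 : ∀ p, tfun p ≤ 1 := by
    intro p
    have hb := aux_bessel v hv (w p) (hwunit p)
    refine le_trans (le_of_eq ?_) hb
    refine Finset.sum_congr rfl fun i _ => ?_
    congr 1
    exact Finset.sum_congr rfl fun k _ => mul_comm _ _
  have htsum : ∑ p, tfun p = ((Finset.Ici c).card : ℝ) := by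
    rw [hcard]
    calc ∑ p, tfun p = ∑ i : Fin m, ∑ p, (∑ k, w p k * v i k) ^ 2 := Finset.sum_comm
      _ = ∑ i : Fin m, (1 : ℝ) := by
          refine Finset.sum_congr rfl fun i _ => ?_
          rw [aux_parseval w hw (v i)]
          exact hvunit i
      _ = ((m : ℕ) : ℝ) := by simp
  have hlp := aux_lp_lemma mu hmu c tfun ht0 ht1 htsum
  refine hlp.trans (le_of_eq ?_)
  calc ∑ p, mu p * tfun p = ∑ p, ∑ i : Fin m, mu p * (∑ k, w p k * v i k) ^ 2 := by
        refine Finset.sum_congr rfl fun p _ => ?_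
        rw [htfun, Finset.mul_sum]
    _ = ∑ i : Fin m, ∑ p, mu p * (∑ k, w p k * v i k) ^ 2 := Finset.sum_comm

set_option maxHeartbeats 1000000 in
/-- upper bound on minus the sum of the r+1 smallest eigenvalues of ∇̃. -/
theorem stmt13 (n r : ℕ) (hr : 1 ≤ r) (hrn : r < n)
    (β ξ : ℝ) (hβ : 0 < β)
    (f : Matrix (Fin n) (Fin n) ℝ → ℝ)
    (g : Matrix (Fin n) (Fin n) ℝ → Matrix (Fin n) (Fin n) ℝ)
    (hconv : ConvexOn ℝ Set.univ f) (hgrad : IsGradient f g)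
    (hsmooth : ∀ X Y, frobNorm (g X - g Y) ≤ β * frobNorm (X - Y))
    (Xstar : Matrix (Fin n) (Fin n) ℝ)
    (hmin : IsMinimizerOn f (spectrahedron n) Xstar)
    (hrankXs : Xstar.rank = r)
    (mu : Fin n → ℝ) (w : Fin n → Fin n → ℝ)
    (hmu : IsEigenDecomp (g Xstar) mu w)
    (δ : ℝ) (hδ : δ = mu ⟨n - r - 1, by omega⟩ - mu ⟨n - 1, by omega⟩)
    (X : Matrix (Fin n) (Fin n) ℝ) (hXS : X ∈ spectrahedron n)
    (D : Matrix (Fin n) (Fin n) ℝ) (hDsymm : D.IsSymm)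
    (lamD : Fin n → ℝ) (wD : Fin n → Fin n → ℝ)
    (hlamD : IsEigenDecomp D lamD wD)
    (hDerr : specNorm (D - g X) ≤ ξ) :
    -(∑ i : Fin (r + 1), lamD ⟨n - 1 - (i : ℕ), by have := i.2; omega⟩) ≤
      -(((r : ℝ) + 1) * mu ⟨n - 1, by omega⟩ + δ) +
        ((r : ℝ) + 1) * (ξ + β * frobNorm (X - Xstar)) := by
  classical
  obtain ⟨hmuA, hworth, hMdec⟩ := hmu
  obtain ⟨hlamA, hwDorth, hDdec⟩ := hlamD
  set M : Matrix (Fin n) (Fin n) ℝ := g Xstar with hMdef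
  set ε : ℝ := ξ + β * frobNorm (X - Xstar) with hεdef
  have hwDunit : ∀ a, ∑ k, wD a k ^ 2 = 1 := fun a => by
    have := hwDorth a a; simpa [sq] using this
  have hwunit : ∀ a, ∑ k, w a k ^ 2 = 1 := fun a => by
    have := hworth a a; simpa [sq] using this
  -- eigenvectors give eigenvalues through the quadratic form
  have hqD : ∀ a, auxQ D (wD a) = lamD a := by
    intro a
    rw [hDdec, aux_q_decomp]
    calc ∑ m, lamD m * (∑ k, wD m k * wD a k) ^ 2
        = ∑ m, if m = a then lamD m else 0 := by
          refine Finset.sum_congr rfl fun m _ => ?_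
          rw [hwDorth m a]; split <;> ring
      _ = lamD a := by simp
  -- perturbation bound for quadratic forms
  have hpert : ∀ u : Fin n → ℝ, (∑ k, u k ^ 2 = 1) → auxQ M u - ε ≤ auxQ D u := by
    intro u hu
    have habs : |auxQ (D - M) u| ≤ ε := by
      rw [aux_q_eq_inner]
      have hnu : ‖auxToE u‖ = 1 := by rw [aux_norm_toE, hu, Real.sqrt_one]
      have hdecomp : (D - M).mulVec u = (D - g X).mulVec u + (g X - M).mulVec u := by
        rw [← Matrix.add_mulVec, sub_add_sub_cancel]
      have h1 : ‖auxToE ((D - g X).mulVec u)‖ ≤ ξ := by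
        rw [aux_norm_toE]
        have hbdd : BddAbove {s : ℝ | ∃ v : Fin n → ℝ, (∑ k, v k ^ 2) = 1 ∧
            s = Real.sqrt (∑ i, ((D - g X).mulVec v i) ^ 2)} := by
          refine ⟨Real.sqrt (∑ i, ∑ j, ((D - g X) i j) ^ 2), ?_⟩
          rintro s ⟨v, hv, rfl⟩
          exact aux_mulVec_sq_le_frob _ v hv
        have hmem : Real.sqrt (∑ i, ((D - g X).mulVec u i) ^ 2) ∈
            {s : ℝ | ∃ v : Fin n → ℝ, (∑ k, v k ^ 2) = 1 ∧
              s = Real.sqrt (∑ i, ((D - g X).mulVec v i) ^ 2)} := ⟨u, hu, rfl⟩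
        exact le_trans (le_csSup hbdd hmem) hDerr
      have h2 : ‖auxToE ((g X - M).mulVec u)‖ ≤ β * frobNorm (X - Xstar) := by
        rw [aux_norm_toE]
        refine le_trans (aux_mulVec_sq_le_frob _ u hu) ?_
        exact hsmooth X Xstar
      calc |(inner ℝ (auxToE u) (auxToE ((D - M).mulVec u)) : ℝ)|
          ≤ ‖auxToE u‖ * ‖auxToE ((D - M).mulVec u)‖ := abs_real_inner_le_norm _ _
        _ = ‖auxToE ((D - M).mulVec u)‖ := by rw [hnu, one_mul]
        _ = ‖auxToE ((D - g X).mulVec u) + auxToE ((g X - M).mulVec u)‖ := by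
            rw [hdecomp]; rfl
        _ ≤ ‖auxToE ((D - g X).mulVec u)‖ + ‖auxToE ((g X - M).mulVec u)‖ :=
            norm_add_le _ _
        _ ≤ ξ + β * frobNorm (X - Xstar) := add_le_add h1 h2
    have hqs := aux_q_sub D M u
    have := abs_le.mp habs
    linarith [this.1, this.2]
  -- index bookkeeping
  set c : Fin n := ⟨n - r - 1, by omega⟩ with hc
  set last : Fin n := ⟨n - 1, by omega⟩ with hlast
  set idx : Fin (r + 1) → Fin n := fun i => ⟨n - 1 - (i : ℕ), by have := i.2; omega⟩ with hidxdef
  have hδ' : δ = mu c - mu last := hδ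
  have hidx : ∀ i j : Fin (r + 1), (idx i = idx j) ↔ i = j := by
    intro i j
    constructor
    · intro h
      have hv := congrArg Fin.val h
      have hi := i.2; have hj := j.2
      simp only [hidxdef] at hv
      exact Fin.ext (by omega)
    · intro h; rw [h]
  have hvorth : ∀ i j : Fin (r + 1),
      (∑ k, wD (idx i) k * wD (idx j) k) = if i = j then (1 : ℝ) else 0 := by
    intro i j
    rw [hwDorth (idx i) (idx j)]
    by_cases h : i = j <;> simp [h, hidx i j]
  have hcard : (Finset.Ici c).card = r + 1 := by
    rw [Fin.card_Ici]
    simp only [hc]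
    omega
  have hky : ∑ j ∈ Finset.Ici c, mu j ≤ ∑ i : Fin (r + 1), auxQ M (wD (idx i)) := by
    have h := aux_kyfan mu hmuA c hcard w hworth (fun i => wD (idx i)) hvorth
    refine h.trans (le_of_eq ?_)
    refine Finset.sum_congr rfl fun i _ => ?_
    rw [hMdec, aux_q_decomp]
  -- lower bound for the tail sum of mu
  have hIci : ((r : ℝ) + 1) * mu last + δ ≤ ∑ j ∈ Finset.Ici c, mu j := by
    have hjlast : ∀ j : Fin n, j ≤ last := by
      intro j
      have := j.2
      simp only [hlast, Fin.le_def]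
      omega
    have hstep : ∑ j ∈ Finset.Ici c, (mu last + if j = c then δ else 0)
        ≤ ∑ j ∈ Finset.Ici c, mu j := by
      refine Finset.sum_le_sum fun j hj => ?_
      by_cases h : j = c
      · subst h
        rw [if_pos rfl, hδ']
        ring_nf
        exact le_refl _
      · rw [if_neg h]
        have := hmuA (hjlast j)
        linarith
    have hval : ∑ j ∈ Finset.Ici c, (mu last + if j = c then δ else 0)
        = ((r : ℝ) + 1) * mu last + δ := by
      rw [Finset.sum_add_distrib, Finset.sum_const, hcard, Finset.sum_ite_eq'
        (Finset.Ici c) c (fun _ => δ), if_pos (Finset.mem_Ici.mpr le_rfl)]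
      push_cast
      ring
    linarith [hstep, hval.ge]
  -- assemble
  have hfin : ∀ i : Fin (r + 1), auxQ M (wD (idx i)) - ε ≤ lamD (idx i) := by
    intro i
    rw [← hqD (idx i)]
    exact hpert _ (hwDunit _)
  have hsum1 : ∑ i : Fin (r + 1), (auxQ M (wD (idx i)) - ε)
      ≤ ∑ i : Fin (r + 1), lamD (idx i) :=
    Finset.sum_le_sum fun i _ => hfin i
  have hsum2 : ∑ i : Fin (r + 1), (auxQ M (wD (idx i)) - ε)
      = ∑ i : Fin (r + 1), auxQ M (wD (idx i)) - ((r : ℝ) + 1) * ε := by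
    rw [Finset.sum_sub_distrib, Finset.sum_const]
    simp only [Finset.card_univ, Fintype.card_fin, nsmul_eq_mul]
    push_cast
    ring
  have hmain : ((r : ℝ) + 1) * mu last + δ - ((r : ℝ) + 1) * ε
      ≤ ∑ i : Fin (r + 1), lamD (idx i) := by
    linarith [hsum1, hsum2, hky, hIci]
  have hgoal : -(∑ i : Fin (r + 1), lamD (idx i)) ≤
      -(((r : ℝ) + 1) * mu last + δ) + ((r : ℝ) + 1) * ε := by
    linarith
  exact hgoal

end LRSGD
end

section
/- In the SGD process on the spectrahedron with fixed step-size η > 0 (Y_1 = X_1 ∈ S_n; for t ≥ 1: Y_{t+1} = X_t − η∇̂_t and X_{t+1} = Π_{S_n}[Y_{t+1}], where ∇̂_t is a random matrix in 𝕊^n with 𝔼[∇̂_t | ℱ_t] = ∇f(X_t) and ‖∇̂_t‖_F ≤ G a.s., and ℱ_t = σ(X_1, ..., X_t)), for a minimizer X* of the convex differentiable f over S_n and Z_t := ‖Y_t − X*‖_F² − (t−1)η²G², it holds almost surely for every t ≥ 2 that Z_t − 𝔼[Z_t | ℱ_{t−1}] ≤ 4√2·ηG + η²G². -/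
open scoped BigOperators
open MeasureTheory
open scoped Matrix

namespace LRSGD

/-- σ-algebra generated (entrywise) by a matrix-valued random variable. -/
def entrySigma {n : ℕ} {Ω : Type} (X : Ω → Matrix (Fin n) (Fin n) ℝ) :
    MeasurableSpace Ω :=
  ⨆ i, ⨆ j, MeasurableSpace.comap (fun ω => X ω i j) inferInstance

lemma cs2 {n : ℕ} (a b : Fin n → Fin n → ℝ) :
    (∑ i, ∑ j, a i j * b i j) ^ 2 ≤ (∑ i, ∑ j, a i j ^ 2) * (∑ i, ∑ j, b i j ^ 2) := by
  have h := Finset.sum_mul_sq_le_sq_mul_sq Finset.univ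
    (fun p : Fin n × Fin n => a p.1 p.2) (fun p => b p.1 p.2)
  simpa [Fintype.sum_prod_type] using h

lemma entry_sq_le {n : ℕ} {A : Matrix (Fin n) (Fin n) ℝ} (hA : A.PosSemidef) (i j : Fin n) :
    A i j ^ 2 ≤ A i i * A j j := by
  obtain ⟨B, rfl⟩ : ∃ B : Matrix (Fin n) (Fin n) ℝ, A = Bᴴ * B := by
    classical
    open scoped MatrixOrder in exact CStarAlgebra.nonneg_iff_eq_star_mul_self.mp hA.nonneg
  have h := Finset.sum_mul_sq_le_sq_mul_sq Finset.univ (fun k => B k i) (fun k => B k j)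
  simpa [Matrix.mul_apply, Matrix.conjTranspose_apply, sq] using h

lemma norm_sq_le_one {n : ℕ} {U : Matrix (Fin n) (Fin n) ℝ} (hU : U ∈ spectrahedron n) :
    ∑ i, ∑ j, U i j ^ 2 ≤ 1 := by
  have h1 : ∑ i, ∑ j, U i j ^ 2 ≤ ∑ i, ∑ j, U i i * U j j := by
    refine Finset.sum_le_sum fun i _ => Finset.sum_le_sum fun j _ => entry_sq_le hU.1 i j
  have h2 : ∑ i, ∑ j, U i i * U j j = U.trace * U.trace := by
    rw [Matrix.trace]
    simp [Matrix.diag, Finset.sum_mul_sum]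
  calc ∑ i, ∑ j, U i j ^ 2 ≤ U.trace * U.trace := by rw [← h2]; exact h1
    _ = 1 := by rw [hU.2]; ring

lemma inner_psd_nonneg {n : ℕ} {A B : Matrix (Fin n) (Fin n) ℝ}
    (hA : A.PosSemidef) (hB : B.PosSemidef) : 0 ≤ ∑ i, ∑ j, A i j * B i j := by
  obtain ⟨P, rfl⟩ : ∃ B : Matrix (Fin n) (Fin n) ℝ, A = Bᴴ * B := by
    classical
    open scoped MatrixOrder in exact CStarAlgebra.nonneg_iff_eq_star_mul_self.mp hA.nonneg
  obtain ⟨Q, rfl⟩ : ∃ C : Matrix (Fin n) (Fin n) ℝ, B = Cᴴ * C := by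
    classical
    open scoped MatrixOrder in exact CStarAlgebra.nonneg_iff_eq_star_mul_self.mp hB.nonneg
  have h0 : ∑ i, ∑ j, (Pᴴ * P) i j * (Qᴴ * Q) i j
      = Matrix.trace ((Pᴴ * P) * ((Qᴴ * Q)ᵀ)) := by
    rw [Matrix.trace]
    simp only [Matrix.diag, Matrix.mul_apply, Matrix.transpose_apply, Finset.mul_sum,
      Matrix.conjTranspose_apply, star_trivial]
  have hsym : (Qᴴ * Q)ᵀ = Qᴴ * Q := by
    ext i j; simp [Matrix.mul_apply, Matrix.conjTranspose_apply, mul_comm]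
  have h1 : (Pᴴ * P) * (Qᴴ * Q) = Pᴴ * (P * Qᴴ) * Q := by
    simp only [Matrix.mul_assoc]
  have h2 : Matrix.trace (Pᴴ * (P * Qᴴ) * Q) = Matrix.trace ((Q * Pᴴ) * (P * Qᴴ)) := by
    rw [Matrix.trace_mul_cycle]
  have h3 : Q * Pᴴ = (P * Qᴴ)ᵀ := by
    ext i j
    simp [Matrix.mul_apply, Matrix.conjTranspose_apply, Matrix.transpose_apply, mul_comm]
  rw [h0, hsym, h1, h2, h3]
  have : Matrix.trace ((P * Qᴴ)ᵀ * (P * Qᴴ)) = ∑ i, ∑ k, ((P * Qᴴ) k i) ^ 2 := by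
    rw [Matrix.trace]
    simp only [Matrix.diag, Matrix.mul_apply, Matrix.transpose_apply, sq]
  rw [this]
  positivity

lemma dist_sq_le_two {n : ℕ} {U V : Matrix (Fin n) (Fin n) ℝ}
    (hU : U ∈ spectrahedron n) (hV : V ∈ spectrahedron n) :
    ∑ i, ∑ j, (U i j - V i j) ^ 2 ≤ 2 := by
  have hU1 := norm_sq_le_one hU
  have hV1 := norm_sq_le_one hV
  have hin := inner_psd_nonneg hU.1 hV.1
  have expand : ∑ i, ∑ j, (U i j - V i j) ^ 2
      = (∑ i, ∑ j, U i j ^ 2) - 2 * (∑ i, ∑ j, U i j * V i j) + (∑ i, ∑ j, V i j ^ 2) := by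
    have h : ∀ i j : Fin n, (U i j - V i j) ^ 2
        = U i j ^ 2 - 2 * (U i j * V i j) + V i j ^ 2 := fun i j => by ring
    simp_rw [h, Finset.sum_add_distrib, Finset.sum_sub_distrib, ← Finset.mul_sum]
  linarith

lemma sum_expand {n : ℕ} (P Dm : Matrix (Fin n) (Fin n) ℝ) (η : ℝ) :
    ∑ i, ∑ j, (P i j - η * Dm i j) ^ 2
      = (∑ i, ∑ j, P i j ^ 2)
        + (η ^ 2 * (∑ i, ∑ j, Dm i j ^ 2) - 2 * η * (∑ i, ∑ j, Dm i j * P i j)) := by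
  have h : ∀ i j : Fin n, (P i j - η * Dm i j) ^ 2
      = P i j ^ 2 + (η ^ 2 * Dm i j ^ 2 - 2 * η * (Dm i j * P i j)) := fun i j => by ring
  simp_rw [h, Finset.sum_add_distrib, Finset.sum_sub_distrib, ← Finset.mul_sum]


/-- bounded differences of the submartingale sequence:
Z_t − 𝔼[Z_t | ℱ_{t−1}] ≤ 4√2·ηG + η²G². -/
theorem stmt16 (n : ℕ)
    (f : Matrix (Fin n) (Fin n) ℝ → ℝ)
    (g : Matrix (Fin n) (Fin n) ℝ → Matrix (Fin n) (Fin n) ℝ)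
    (hconv : ConvexOn ℝ Set.univ f) (hgrad : IsGradient f g)
    (Xstar : Matrix (Fin n) (Fin n) ℝ)
    (hmin : IsMinimizerOn f (spectrahedron n) Xstar)
    (Ω : Type) (m0 : MeasurableSpace Ω) (μ : Measure Ω) [IsProbabilityMeasure μ]
    (η G : ℝ) (hη : 0 < η)
    (X Y D : ℕ → Ω → Matrix (Fin n) (Fin n) ℝ)
    (ℱ : ℕ → MeasurableSpace Ω)
    (hℱ : ∀ t, ℱ t = ⨆ s ∈ Set.Icc 1 t, entrySigma (X s))
    (hℱm : ∀ t, ℱ t ≤ m0)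
    (hXmeas : ∀ t i j, Measurable fun ω => X t ω i j)
    (hDmeas : ∀ t i j, Measurable fun ω => D t ω i j)
    (hY1 : ∀ ω, Y 1 ω = X 1 ω)
    (hX1 : ∀ ω, X 1 ω ∈ spectrahedron n)
    (hYrec : ∀ t, 1 ≤ t → ∀ ω, Y (t + 1) ω = X t ω - η • D t ω)
    (hXrec : ∀ t, 1 ≤ t → ∀ ω, IsProjOn (spectrahedron n) (Y (t + 1) ω) (X (t + 1) ω))
    (hunbiased : ∀ t, 1 ≤ t → ∀ i j,
      (μ[fun ω => D t ω i j | ℱ t]) =ᵐ[μ] fun ω => g (X t ω) i j)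
    (hGbound : ∀ t, 1 ≤ t → ∀ᵐ ω ∂μ, frobNorm (D t ω) ≤ G) :
    ∀ t, 1 ≤ t → ∀ᵐ ω ∂μ,
      (frobNorm (Y (t + 1) ω - Xstar) ^ 2 - (t : ℝ) * η ^ 2 * G ^ 2) -
        (μ[fun ω' => frobNorm (Y (t + 1) ω' - Xstar) ^ 2 - (t : ℝ) * η ^ 2 * G ^ 2
          | ℱ t]) ω ≤
      4 * Real.sqrt 2 * η * G + η ^ 2 * G ^ 2 := by
  intro t ht
  have hm : ℱ t ≤ m0 := hℱm t
  haveI : (MeasureTheory.ae μ).NeBot := ae_neBot.mpr (IsProbabilityMeasure.ne_zero μ)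
  -- X t ω is in the spectrahedron
  have hXin : ∀ ω, X t ω ∈ spectrahedron n := by
    intro ω
    match t, ht with
    | 1, _ => exact hX1 ω
    | (s+2), _ => exact (hXrec (s+1) (by omega) ω).1
  have hG0 : 0 ≤ G := by
    obtain ⟨ω0, hω0⟩ := (hGbound t ht).exists
    exact le_trans (Real.sqrt_nonneg _) hω0
  set K : ℝ := (t : ℝ) * η ^ 2 * G ^ 2 with hK
  set FA : Ω → ℝ := fun ω => ∑ i, ∑ j, (X t ω i j - Xstar i j) ^ 2 with hFAdef
  set FB : Ω → ℝ := fun ω =>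
    η ^ 2 * (∑ i, ∑ j, (D t ω i j) ^ 2)
      - 2 * η * (∑ i, ∑ j, D t ω i j * (X t ω i j - Xstar i j)) with hFBdef
  -- pointwise decomposition
  have hW : ∀ ω, frobNorm (Y (t + 1) ω - Xstar) ^ 2 = FA ω + FB ω := by
    intro ω
    have hfn : frobNorm (Y (t + 1) ω - Xstar) ^ 2
        = ∑ i, ∑ j, (Y (t + 1) ω - Xstar) i j ^ 2 := by
      rw [frobNorm]
      exact Real.sq_sqrt (by positivity)
    have hent : ∀ i j, (Y (t + 1) ω - Xstar) i j
        = (X t ω i j - Xstar i j) - η * D t ω i j := by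
      intro i j
      rw [hYrec t ht ω]
      simp [Matrix.sub_apply]
      ring
    rw [hfn]
    simp_rw [hent]
    rw [hFAdef, hFBdef]
    exact sum_expand (Matrix.of fun i j => X t ω i j - Xstar i j) (D t ω) η
  -- bounds
  have hSP : ∀ ω, ∑ i, ∑ j, (X t ω i j - Xstar i j) ^ 2 ≤ 2 :=
    fun ω => dist_sq_le_two (hXin ω) hmin.1
  have hSD : ∀ᵐ ω ∂μ, ∑ i, ∑ j, (D t ω i j) ^ 2 ≤ G ^ 2 := by
    filter_upwards [hGbound t ht] with ω hω
    rw [frobNorm] at hω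
    have h0 : (0:ℝ) ≤ ∑ i, ∑ j, (D t ω i j) ^ 2 := by positivity
    calc ∑ i, ∑ j, (D t ω i j) ^ 2
        = Real.sqrt (∑ i, ∑ j, (D t ω i j) ^ 2) ^ 2 := (Real.sq_sqrt h0).symm
      _ ≤ G ^ 2 := pow_le_pow_left₀ (Real.sqrt_nonneg _) hω 2
  have hIbnd : ∀ᵐ ω ∂μ,
      |∑ i, ∑ j, D t ω i j * (X t ω i j - Xstar i j)| ≤ G * Real.sqrt 2 := by
    filter_upwards [hSD] with ω hSDω
    have hcs := cs2 (fun i j => D t ω i j) (fun i j => X t ω i j - Xstar i j)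
    have hSPω := hSP ω
    have h0 : (0:ℝ) ≤ ∑ i, ∑ j, (X t ω i j - Xstar i j) ^ 2 := by positivity
    have h2 : (∑ i, ∑ j, D t ω i j * (X t ω i j - Xstar i j)) ^ 2 ≤ G ^ 2 * 2 :=
      le_trans hcs (mul_le_mul hSDω hSPω h0 (by positivity))
    calc |∑ i, ∑ j, D t ω i j * (X t ω i j - Xstar i j)|
        = Real.sqrt ((∑ i, ∑ j, D t ω i j * (X t ω i j - Xstar i j)) ^ 2) :=
          (Real.sqrt_sq_eq_abs _).symm
      _ ≤ Real.sqrt (G ^ 2 * 2) := Real.sqrt_le_sqrt h2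
      _ = G * Real.sqrt 2 := by
          rw [Real.sqrt_mul (sq_nonneg G), Real.sqrt_sq hG0]
  have hBub : ∀ᵐ ω ∂μ, FB ω ≤ η ^ 2 * G ^ 2 + 2 * η * (G * Real.sqrt 2) := by
    filter_upwards [hSD, hIbnd] with ω h1 h2
    obtain ⟨h2a, h2b⟩ := abs_le.mp h2
    have h3 := mul_le_mul_of_nonneg_left h1 (sq_nonneg η)
    have h4 := mul_le_mul_of_nonneg_left h2a (by linarith : (0:ℝ) ≤ 2 * η)
    rw [hFBdef]
    simp only
    nlinarith
  have hBlb : ∀ᵐ ω ∂μ, -(2 * η * (G * Real.sqrt 2)) ≤ FB ω := by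
    filter_upwards [hSD, hIbnd] with ω h1 h2
    obtain ⟨h2a, h2b⟩ := abs_le.mp h2
    have h0 : (0:ℝ) ≤ ∑ i, ∑ j, (D t ω i j) ^ 2 := by positivity
    have h3 : (0:ℝ) ≤ η ^ 2 * (∑ i, ∑ j, (D t ω i j) ^ 2) := by positivity
    have h4 := mul_le_mul_of_nonneg_left h2b (by linarith : (0:ℝ) ≤ 2 * η)
    rw [hFBdef]
    simp only
    nlinarith
  -- measurability
  have hXtm : ∀ i j, Measurable[ℱ t] fun ω => X t ω i j := by
    intro i j
    apply Measurable.of_comap_le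
    have h1 : MeasurableSpace.comap (fun ω => X t ω i j) inferInstance
        ≤ entrySigma (X t) := by
      unfold entrySigma
      exact le_iSup_of_le i (le_iSup_of_le j le_rfl)
    refine h1.trans ?_
    rw [hℱ t]
    exact le_biSup (fun s => entrySigma (X s)) (Set.mem_Icc.mpr ⟨ht, le_rfl⟩)
  have hFAm : Measurable[ℱ t] FA := by
    rw [hFAdef]
    exact Finset.measurable_sum _ fun i _ => Finset.measurable_sum _ fun j _ =>
      ((hXtm i j).sub measurable_const).pow measurable_const
  have hFBm : Measurable FB := by
    rw [hFBdef]
    have hs : Measurable fun ω => ∑ i, ∑ j, (D t ω i j) ^ 2 :=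
      Finset.measurable_sum _ fun i _ => Finset.measurable_sum _ fun j _ =>
        (hDmeas t i j).pow measurable_const
    have hi : Measurable fun ω => ∑ i, ∑ j, D t ω i j * (X t ω i j - Xstar i j) :=
      Finset.measurable_sum _ fun i _ => Finset.measurable_sum _ fun j _ =>
        (hDmeas t i j).mul ((hXmeas t i j).sub measurable_const)
    exact (hs.const_mul _).sub (hi.const_mul _)
  -- integrability
  have hFA0 : ∀ ω, 0 ≤ FA ω := by
    intro ω; rw [hFAdef]; positivity
  have hFAint : Integrable FA μ := by
    refine Integrable.mono' (integrable_const (2:ℝ))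
      ((hFAm.mono hm le_rfl).aestronglyMeasurable) (ae_of_all _ fun ω => ?_)
    rw [Real.norm_eq_abs, abs_of_nonneg (hFA0 ω)]
    exact hSP ω
  have hFBint : Integrable FB μ := by
    refine Integrable.mono'
      (integrable_const (η ^ 2 * G ^ 2 + 2 * η * (G * Real.sqrt 2)))
      hFBm.aestronglyMeasurable ?_
    filter_upwards [hBub, hBlb] with ω h1 h2
    rw [Real.norm_eq_abs]
    have h5 : (0:ℝ) ≤ η ^ 2 * G ^ 2 := by positivity
    exact abs_le.mpr ⟨by linarith, h1⟩
  -- conditional expectation computations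
  have hfuneq : (fun ω' => frobNorm (Y (t + 1) ω' - Xstar) ^ 2 - K)
      = FA + FB - (fun _ => K) := by
    funext ω'
    simp only [Pi.sub_apply, Pi.add_apply, hW ω']
  have hc1 : μ[FA + FB - (fun _ => K)|ℱ t]
      =ᵐ[μ] μ[FA + FB|ℱ t] - fun _ => K := by
    have h := condExp_sub (μ := μ) (m := ℱ t) (hFAint.add hFBint) (integrable_const K)
    rwa [condExp_const hm] at h
  have hc2 : μ[FA + FB|ℱ t] =ᵐ[μ] FA + μ[FB|ℱ t] := by
    have h := condExp_add (μ := μ) (m := ℱ t) hFAint hFBint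
    rwa [condExp_of_stronglyMeasurable hm hFAm.stronglyMeasurable hFAint] at h
  have hc3 : ∀ᵐ ω ∂μ, -(2 * η * (G * Real.sqrt 2)) ≤ (μ[FB|ℱ t]) ω := by
    have h := condExp_mono (μ := μ) (m := ℱ t)
      (integrable_const (-(2 * η * (G * Real.sqrt 2)))) hFBint hBlb
    rw [condExp_const hm] at h
    exact h
  rw [hfuneq]
  filter_upwards [hc1, hc2, hc3, hBub] with ω e1 e2 e3 e4
  rw [e1, Pi.sub_apply, e2, Pi.add_apply]
  have hWω := hW ω
  linarith


end LRSGD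
end
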